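/- arXiv:2103.01668 — 4 statements merged into one kernel-verified Lean document; each statement's English description precedes it below -/
import Mathlib

section
/- Suppose there exist r ≥ 2 and a constant c > 0 such that c·a^{(r−2)/2} ≤ φ₂(a) for all a ≥ 1. Let (Ω, μ) be a finite measure space, d ≥ 1, and s = r/(r−1). Then for every w ∈ Lʳ(μ; ℝᵈ) and every f₀ ∈ Lˢ(μ; ℝᵈ), ∫_Ω Ψ(‖w‖²) dμ − ∫_Ω f₀·w dμ ≥ (Φ₁(0) − c/r)·μ(Ω) + (c/r)·‖w‖_{Lʳ}ʳ − ‖f₀‖_{Lˢ}·‖w‖_{Lʳ}. -/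
open Set MeasureTheory intervalIntegral
open scoped RealInnerProductSpace ENNReal

/-- coercivity estimate for the dissipation minus the work of the
body force: for w ∈ Lʳ(μ; ℝᵈ) and f₀ ∈ Lˢ(μ; ℝᵈ),
∫ Ψ(‖w‖²) − ∫ f₀·w ≥ (Φ₁(0) − c/r)·μ(Ω) + (c/r)‖w‖_{Lʳ}ʳ − ‖f₀‖_{Lˢ}‖w‖_{Lʳ}. -/
theorem stmt_7 {Ω : Type*} [MeasurableSpace Ω] (μ : Measure Ω) [IsFiniteMeasure μ]
    (d : ℕ) (hd : 1 ≤ d) (r s c : ℝ) (hr : 2 ≤ r) (hs : s = r / (r - 1)) (hc : 0 < c)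
    (φ₁ φ₂ : ℝ → ℝ)
    (hφ₁c : ContinuousOn φ₁ (Icc 0 1)) (hφ₂c : ContinuousOn φ₂ (Ici 1))
    (hφ₁m : MonotoneOn φ₁ (Icc 0 1)) (hφ₂m : MonotoneOn φ₂ (Ici 1))
    (hφ₁nn : ∀ a ∈ Icc (0:ℝ) 1, 0 ≤ φ₁ a) (hφ₂nn : ∀ a ∈ Ici (1:ℝ), 0 ≤ φ₂ a)
    (hlow : ∀ a : ℝ, 1 ≤ a → c * a ^ ((r - 2) / 2) ≤ φ₂ a)
    (Ψ : ℝ → ℝ)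
    (hΨ : ∀ a : ℝ, 0 ≤ a →
      Ψ a = if a ≤ 1 then (1/2) * ∫ t in (1:ℝ)..a, φ₁ t
            else (1/2) * ∫ t in (1:ℝ)..a, φ₂ t)
    (w f₀ : Ω → EuclideanSpace ℝ (Fin d))
    (hw : MemLp w (ENNReal.ofReal r) μ) (hf₀ : MemLp f₀ (ENNReal.ofReal s) μ)
    (hint : Integrable (fun x => Ψ (‖w x‖ ^ 2)) μ) :
    (∫ x, Ψ (‖w x‖ ^ 2) ∂μ) - ∫ x, ⟪f₀ x, w x⟫ ∂μ ≥
      ((1/2) * (∫ t in (1:ℝ)..(0:ℝ), φ₁ t) - c / r) * (μ univ).toReal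
      + (c / r) * (∫ x, ‖w x‖ ^ r ∂μ)
      - (∫ x, ‖f₀ x‖ ^ s ∂μ) ^ (1 / s) * (∫ x, ‖w x‖ ^ r ∂μ) ^ (1 / r) := by
  have hr0 : (0:ℝ) < r := by linarith
  have hs1 : 1 < s := by
    rw [hs, lt_div_iff₀ (by linarith : (0:ℝ) < r - 1)]; linarith
  have hconj : Real.HolderConjugate s r := by
    rw [Real.holderConjugate_iff]
    constructor
    · exact hs1
    · rw [hs]; field_simp; ring
  have hcr : 0 < c / r := div_pos hc hr0
  have hφ₁i : ∀ u v : ℝ, u ∈ Icc (0:ℝ) 1 → v ∈ Icc (0:ℝ) 1 →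
      IntervalIntegrable φ₁ MeasureTheory.volume u v := fun u v hu hv =>
    (hφ₁c.mono (uIcc_subset_Icc hu hv)).intervalIntegrable
  set Φ₀ : ℝ := (1/2) * ∫ t in (1:ℝ)..(0:ℝ), φ₁ t with hΦ₀
  have e2 : ∫ t in (1:ℝ)..(0:ℝ), φ₁ t = -∫ t in (0:ℝ)..1, φ₁ t :=
    intervalIntegral.integral_symm 0 1
  have h01 : (0:ℝ) ≤ ∫ t in (0:ℝ)..1, φ₁ t :=
    intervalIntegral.integral_nonneg (by norm_num) (fun u hu => hφ₁nn u hu)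
  have hΦval : Φ₀ = -(1/2) * ∫ t in (0:ℝ)..1, φ₁ t := by rw [hΦ₀, e2]; ring
  have hΦ₀le : Φ₀ ≤ 0 := by rw [hΦval]; nlinarith
  -- key pointwise bound
  have key : ∀ x, Φ₀ - c/r + (c/r) * ‖w x‖ ^ r ≤ Ψ (‖w x‖ ^ 2) := by
    intro x
    set n := ‖w x‖ with hn
    have hn0 : 0 ≤ n := norm_nonneg _
    have ha0 : 0 ≤ n ^ 2 := sq_nonneg n
    rw [hΨ _ ha0]
    by_cases h1 : n ^ 2 ≤ 1
    · rw [if_pos h1]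
      have hnle : n ≤ 1 := by nlinarith
      have hnr : n ^ r ≤ 1 := Real.rpow_le_one hn0 hnle hr0.le
      have hcrn : (c/r) * n ^ r ≤ c/r := by
        have := mul_le_of_le_one_right hcr.le hnr
        linarith
      have hsplit : (∫ t in (0:ℝ)..(n^2), φ₁ t) + (∫ t in (n^2:ℝ)..1, φ₁ t)
          = ∫ t in (0:ℝ)..1, φ₁ t :=
        intervalIntegral.integral_add_adjacent_intervals
          (hφ₁i 0 (n^2) ⟨le_rfl, by norm_num⟩ ⟨ha0, h1⟩)
          (hφ₁i (n^2) 1 ⟨ha0, h1⟩ ⟨by norm_num, le_rfl⟩)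
      have h0n : 0 ≤ ∫ t in (0:ℝ)..(n^2), φ₁ t :=
        intervalIntegral.integral_nonneg ha0 (fun u hu =>
          hφ₁nn u ⟨hu.1, le_trans hu.2 h1⟩)
      have e1 : ∫ t in (1:ℝ)..(n^2), φ₁ t = -∫ t in (n^2:ℝ)..1, φ₁ t :=
        intervalIntegral.integral_symm _ _
      rw [e1]
      linarith
    · rw [if_neg h1]
      push_neg at h1
      have ha1 : (1:ℝ) ≤ n ^ 2 := h1.le
      have hφ₂i : IntervalIntegrable φ₂ MeasureTheory.volume 1 (n^2) :=
        (hφ₂c.mono (by rw [uIcc_of_le ha1]; exact Icc_subset_Ici_self)).intervalIntegrable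
      have hci : IntervalIntegrable (fun t => c * t ^ ((r-2)/2))
          MeasureTheory.volume 1 (n^2) := by
        apply ContinuousOn.intervalIntegrable
        apply ContinuousOn.mul continuousOn_const
        apply ContinuousOn.rpow_const continuousOn_id
        intro t ht
        rw [uIcc_of_le ha1] at ht
        exact Or.inl (by exact_mod_cast (lt_of_lt_of_le one_pos ht.1).ne')
      have hmono : ∫ t in (1:ℝ)..(n^2), c * t ^ ((r-2)/2) ≤ ∫ t in (1:ℝ)..(n^2), φ₂ t :=
        intervalIntegral.integral_mono_on ha1 hci hφ₂i (fun t ht => hlow t ht.1)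
      have he : (r-2)/2 + 1 = r/2 := by ring
      have hval : ∫ t in (1:ℝ)..(n^2), c * t ^ ((r-2)/2)
          = c * (((n^2) ^ (r/2) - 1) / (r/2)) := by
        rw [intervalIntegral.integral_const_mul,
          integral_rpow (Or.inl (by linarith : (-1:ℝ) < (r-2)/2)), he, Real.one_rpow]
      have hnr : ((n^2 : ℝ)) ^ (r/2) = n ^ r := by
        rw [← Real.rpow_natCast n 2, ← Real.rpow_mul hn0]
        congr 1
        push_cast
        ring
      have heq : (1/2) * (c * (((n^2) ^ (r/2) - 1) / (r/2))) = (c/r) * n^r - c/r := by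
        rw [hnr]
        field_simp
      linarith
  -- integrability of ‖w‖^r
  have hwr : Integrable (fun x => ‖w x‖ ^ r) μ := by
    have hne0 : ENNReal.ofReal r ≠ 0 := by
      simp [ENNReal.ofReal_eq_zero, not_le, hr0]
    have := hw.integrable_norm_rpow hne0 ENNReal.ofReal_ne_top
    simpa [ENNReal.toReal_ofReal hr0.le] using this
  have hg : Integrable (fun x => Φ₀ - c/r + (c/r) * ‖w x‖ ^ r) μ :=
    (integrable_const _).add (hwr.const_mul _)
  have h1 : (Φ₀ - c/r) * (μ univ).toReal + (c/r) * ∫ x, ‖w x‖ ^ r ∂μ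
      ≤ ∫ x, Ψ (‖w x‖^2) ∂μ := by
    have hmono := integral_mono hg hint key
    rw [integral_add (integrable_const _) (hwr.const_mul _), MeasureTheory.integral_const,
      MeasureTheory.integral_const_mul] at hmono
    rw [smul_eq_mul, measureReal_def] at hmono
    linarith [hmono, mul_comm ((μ univ).toReal) (Φ₀ - c/r)]
  -- Hölder
  have hs0 : (0:ℝ) < s := by linarith
  have hpq : (1:ℝ≥0∞)/1 = 1/ENNReal.ofReal s + 1/ENNReal.ofReal r := by
    rw [one_div, one_div, one_div, inv_one, ← ENNReal.ofReal_inv_of_pos hs0,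
      ← ENNReal.ofReal_inv_of_pos hr0,
      ← ENNReal.ofReal_add (by positivity) (by positivity),
      hconj.inv_add_inv_eq_one, ENNReal.ofReal_one]
  have hprod : Integrable (fun x => ‖f₀ x‖ * ‖w x‖) μ := by
    rw [← memLp_one_iff_integrable]
    have hmem := hw.norm.smul hf₀.norm (r := 1) (hpqr := ⟨by simpa [one_div] using hpq.symm⟩)
    simpa [Pi.smul_apply', smul_eq_mul, Pi.mul_def] using hmem
  have hinner_int : Integrable (fun x => ⟪f₀ x, w x⟫) μ := by
    refine hprod.mono' (AEStronglyMeasurable.inner hf₀.1 hw.1) ?_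
    filter_upwards with x
    exact norm_inner_le_norm _ _
  have h2 : ∫ x, ⟪f₀ x, w x⟫ ∂μ ≤
      (∫ x, ‖f₀ x‖^s ∂μ)^(1/s) * (∫ x, ‖w x‖^r ∂μ)^(1/r) := by
    have ha : ∫ x, ⟪f₀ x, w x⟫ ∂μ ≤ ∫ x, ‖f₀ x‖ * ‖w x‖ ∂μ :=
      integral_mono hinner_int hprod (fun x => real_inner_le_norm _ _)
    exact ha.trans (integral_mul_norm_le_Lp_mul_Lq hconj hf₀ hw)
  rw [ge_iff_le]
  linarith
end

section
/- Let (Ω, μ) be a finite measure space, d ≥ 1, r ≥ 2, s = r/(r−1), and let g : ℝᵈ → ℝ be convex and continuous with 0 ≤ g(x) ≤ C(1 + ‖x‖ʳ) for all x ∈ ℝᵈ and some constant C > 0. Let (vₙ)ₙ ⊂ Lʳ(μ; ℝᵈ) and v ∈ Lʳ(μ; ℝᵈ) be such that ∫_Ω f·vₙ dμ → ∫_Ω f·v dμ as n → ∞ for every f ∈ Lˢ(μ; ℝᵈ) (i.e., vₙ converges weakly to v in Lʳ). Then ∫_Ω g(v) dμ ≤ liminf_{n→∞} ∫_Ω g(vₙ)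 dμ. -/
open Set MeasureTheory Filter
open scoped RealInnerProductSpace ENNReal

section Stmt9Lemmas


variable {E : Type*} [NormedAddCommGroup E] [InnerProductSpace ℝ E] [CompleteSpace E]

/-- Supporting affine minorant up to ε at a point, for a continuous convex function. -/
lemma exists_affine_minorant (g : E → ℝ) (hgconv : ConvexOn ℝ univ g)
    (hgcont : Continuous g) (x₀ : E) {ε : ℝ} (hε : 0 < ε) :
    ∃ a : E, ∃ b : ℝ, (∀ y, ⟪a, y⟫ + b ≤ g y) ∧ g x₀ - ε < ⟪a, x₀⟫ + b := by
  set S : Set (E × ℝ) := {p | g p.1 ≤ p.2} with hSdef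
  have hSconv : Convex ℝ S := by
    have := hgconv.convex_epigraph
    simpa [hSdef, Set.sep_univ] using this
  have hSclosed : IsClosed S := isClosed_le (hgcont.comp continuous_fst) continuous_snd
  have hnot : (x₀, g x₀ - ε) ∉ S := by
    simp only [hSdef, mem_setOf_eq]; push_neg; simpa using hε
  obtain ⟨f, u, hfu, hS⟩ := geometric_hahn_banach_point_closed hSconv hSclosed hnot
  set c : ℝ := f (0, 1) with hc
  have hdecomp : ∀ y t, f (y, t) = f (y, 0) + t * c := by
    intro y t
    have h1 : (y, t) = (y, 0) + t • ((0 : E), (1 : ℝ)) := by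
      simp [Prod.ext_iff]
    rw [h1, map_add, f.map_smul, smul_eq_mul, hc]
  have h1 := hS (x₀, g x₀) (by simp [hSdef])
  rw [hdecomp] at h1
  have h2 := hfu
  rw [hdecomp] at h2
  have hcpos : 0 < c := by nlinarith
  refine ⟨(InnerProductSpace.toDual ℝ E).symm
    ((-c⁻¹) • (f.comp (ContinuousLinearMap.inl ℝ E ℝ))), u / c, ?_, ?_⟩
  · intro y
    have hy := hS (y, g y) (by simp [hSdef])
    rw [hdecomp] at hy
    have : ⟪(InnerProductSpace.toDual ℝ E).symm
        ((-c⁻¹) • (f.comp (ContinuousLinearMap.inl ℝ E ℝ))), y⟫ = -c⁻¹ * f (y, 0) := by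
      rw [InnerProductSpace.toDual_symm_apply]
      simp
    rw [this]
    have hcne : c ≠ 0 := ne_of_gt hcpos
    rw [show -c⁻¹ * f (y, 0) + u / c = (u - f (y, 0)) / c by field_simp; ring,
      div_le_iff₀ hcpos]
    nlinarith
  · have : ⟪(InnerProductSpace.toDual ℝ E).symm
        ((-c⁻¹) • (f.comp (ContinuousLinearMap.inl ℝ E ℝ))), x₀⟫ = -c⁻¹ * f (x₀, 0) := by
      rw [InnerProductSpace.toDual_symm_apply]
      simp
    rw [this]
    have hcne : c ≠ 0 := ne_of_gt hcpos
    rw [show -c⁻¹ * f (x₀, 0) + u / c = (u - f (x₀, 0)) / c by field_simp; ring]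
    rw [lt_div_iff₀ hcpos]
    nlinarith


variable {E : Type*} [NormedAddCommGroup E] [InnerProductSpace ℝ E] [CompleteSpace E]

lemma exists_countable_minorant_family [ProperSpace E]
    [TopologicalSpace.SeparableSpace E]
    (g : E → ℝ) (hgconv : ConvexOn ℝ univ g) (hgcont : Continuous g) :
    ∃ (a : ℕ → E) (b : ℕ → ℝ), (∀ k y, ⟪a k, y⟫ + b k ≤ g y) ∧
      (∀ x : E, ∀ δ : ℝ, 0 < δ → ∃ k, g x - δ < ⟪a k, x⟫ + b k) := by
  have : Nonempty E := ⟨0⟩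
  obtain ⟨u, hu⟩ := TopologicalSpace.exists_dense_seq E
  have key : ∀ k : ℕ, ∃ a : E, ∃ b : ℝ, (∀ y, ⟪a, y⟫ + b ≤ g y) ∧
      g (u k.unpair.1) - 1 / (k.unpair.2 + 1) < ⟪a, u k.unpair.1⟫ + b := by
    intro k
    exact exists_affine_minorant g hgconv hgcont _ (by positivity)
  choose a b hab hpt using key
  refine ⟨a, b, hab, ?_⟩
  intro x δ hδ
  obtain ⟨z, hz, hzmax⟩ := (isCompact_closedBall x 2).exists_isMaxOn
    ⟨x, by simp⟩ hgcont.continuousOn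
  set M := g z with hM
  have hgxM : g x ≤ M := hzmax (by simp : x ∈ Metric.closedBall x 2)
  set K := M - g x + δ / 4 + 1 with hK
  have hKpos : 0 < K := by simp only [hK]; linarith
  obtain ⟨η, hηpos, hηball⟩ := Metric.continuousAt_iff.1 hgcont.continuousAt (δ / 4)
    (by linarith)
  obtain ⟨m, hm⟩ := exists_nat_one_div_lt (show (0:ℝ) < δ / 4 by linarith)
  have hm' : (1 : ℝ) / (m + 1) < δ / 4 := by exact_mod_cast hm
  have hm1 : (1 : ℝ) / (m + 1) ≤ 1 := by
    rw [div_le_one (by positivity)]; linarith [Nat.cast_nonneg (α := ℝ) m]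
  have hmin : (0:ℝ) < min (min η 1) (δ / (4 * K)) := by positivity
  obtain ⟨i, hi⟩ := hu.exists_dist_lt x hmin
  set k := Nat.pair i m with hkdef
  have hui : dist (u i) x < min (min η 1) (δ / (4 * K)) := by rwa [dist_comm]
  have huiη : dist (u i) x < η :=
    lt_of_lt_of_le hui (le_trans (min_le_left _ _) (min_le_left _ _))
  have hui1 : dist (u i) x < 1 :=
    lt_of_lt_of_le hui (le_trans (min_le_left _ _) (min_le_right _ _))
  have huiK : dist (u i) x < δ / (4 * K) := lt_of_lt_of_le hui (min_le_right _ _)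
  have hgui : |g (u i) - g x| < δ / 4 := by
    have := hηball huiη; rwa [Real.dist_eq] at this
  have hgui' : g x - δ / 4 < g (u i) := by
    have := abs_lt.1 hgui; linarith [this.1]
  have hptk : g (u i) - 1 / (m + 1) < ⟪a k, u i⟫ + b k := by
    have := hpt k
    rwa [hkdef, Nat.unpair_pair] at this
  -- bound on ‖a k‖
  have hak : ‖a k‖ ≤ K := by
    by_cases ha0 : a k = 0
    · rw [ha0, norm_zero]; linarith
    · set w : E := ‖a k‖⁻¹ • a k with hw
      have hwnorm : ‖w‖ = 1 := norm_smul_inv_norm ha0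
      have hiw : ⟪a k, w⟫ = ‖a k‖ := by
        rw [hw, real_inner_smul_right, real_inner_self_eq_norm_mul_norm]
        field_simp
      have h1 : ⟪a k, u i + w⟫ + b k ≤ g (u i + w) := hab k _
      have hmem : u i + w ∈ Metric.closedBall x 2 := by
        rw [Metric.mem_closedBall]
        calc dist (u i + w) x ≤ dist (u i + w) (u i) + dist (u i) x := dist_triangle _ _ _
          _ ≤ 1 + 1 := by
              rw [dist_eq_norm, add_sub_cancel_left, hwnorm]
              linarith
          _ = 2 := by norm_num
      have h3 : g (u i + w) ≤ M := hzmax hmem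
      rw [inner_add_right, hiw] at h1
      clear_value w k M K
      linarith
  -- conclusion
  refine ⟨k, ?_⟩
  have hsplit : ⟪a k, x⟫ = ⟪a k, u i⟫ + ⟪a k, x - u i⟫ := by
    rw [inner_sub_right]; ring
  have habs : |⟪a k, x - u i⟫| ≤ ‖a k‖ * ‖x - u i‖ := abs_real_inner_le_norm _ _
  have hnx : ‖x - u i‖ = dist (u i) x := by rw [dist_comm, dist_eq_norm]
  have hprod : ‖a k‖ * ‖x - u i‖ < δ / 4 := by
    have h4 : ‖a k‖ * ‖x - u i‖ ≤ K * ‖x - u i‖ :=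
      mul_le_mul_of_nonneg_right hak (norm_nonneg _)
    have h5 : K * ‖x - u i‖ < K * (δ / (4 * K)) := by
      apply mul_lt_mul_of_pos_left _ hKpos
      rw [hnx]; exact huiK
    have h6 : K * (δ / (4 * K)) = δ / 4 := by field_simp
    clear_value K M k
    linarith
  have hinner_lb : -(δ / 4) < ⟪a k, x - u i⟫ := by
    have := abs_lt.1 (lt_of_le_of_lt habs hprod)
    linarith [this.1]
  rw [hsplit]
  linarith

end Stmt9Lemmas


namespace Stmt9Aux

variable {E : Type*} [NormedAddCommGroup E] [InnerProductSpace ℝ E]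

/-- The affine functions in the family. -/
noncomputable def af (a : ℕ → E) (b : ℕ → ℝ) (k : ℕ) (x : E) : ℝ := ⟪a k, x⟫ + b k

/-- Running maximum of the affine family. -/
noncomputable def gmax (a : ℕ → E) (b : ℕ → ℝ) : ℕ → E → ℝ
  | 0 => af a b 0
  | N + 1 => fun x => max (gmax a b N x) (af a b (N + 1) x)

variable {a : ℕ → E} {b : ℕ → ℝ}

lemma af_le_gmax : ∀ N k, k ≤ N → ∀ x, af a b k x ≤ gmax a b N x := by
  intro N
  induction N with
  | zero => intro k hk x; interval_cases k; exact le_rfl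
  | succ N ih =>
    intro k hk x
    rcases Nat.lt_or_ge k (N + 1) with h | h
    · exact le_trans (ih k (Nat.lt_succ_iff.1 h) x) (le_max_left _ _)
    · have : k = N + 1 := le_antisymm hk h
      subst this
      exact le_max_right _ _

lemma gmax_le {g : E → ℝ} (h : ∀ k, ∀ x, af a b k x ≤ g x) :
    ∀ N x, gmax a b N x ≤ g x := by
  intro N
  induction N with
  | zero => intro x; exact h 0 x
  | succ N ih => intro x; exact max_le (ih x) (h (N + 1) x)

lemma gmax_mono (x : E) : Monotone fun N => gmax a b N x :=
  monotone_nat_of_le_succ fun N => le_max_left _ _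

lemma exists_gmax_eq (N : ℕ) (x : E) : ∃ k, k ≤ N ∧ af a b k x = gmax a b N x := by
  induction N with
  | zero => exact ⟨0, le_rfl, rfl⟩
  | succ N ih =>
    obtain ⟨k, hk, hek⟩ := ih
    rcases le_total (af a b (N + 1) x) (gmax a b N x) with h | h
    · exact ⟨k, hk.trans (Nat.le_succ _), by
        rw [hek]; exact (max_eq_left h).symm⟩
    · exact ⟨N + 1, le_rfl, (max_eq_right h).symm⟩

lemma af_continuous (k : ℕ) : Continuous (af a b k) :=
  (continuous_const.inner continuous_id).add continuous_const

lemma gmax_continuous (N : ℕ) : Continuous (gmax a b N) := by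
  induction N with
  | zero => exact af_continuous 0
  | succ N ih => exact ih.max (af_continuous (N + 1))

/-- Selection of a maximizing index. -/
noncomputable def sel (a : ℕ → E) (b : ℕ → ℝ) (N : ℕ) (x : E) : ℕ :=
  sInf {k | k ≤ N ∧ af a b k x = gmax a b N x}

lemma sel_mem (N : ℕ) (x : E) :
    sel a b N x ≤ N ∧ af a b (sel a b N x) x = gmax a b N x := by
  have hne : {k | k ≤ N ∧ af a b k x = gmax a b N x}.Nonempty := by
    obtain ⟨k, hk, he⟩ := exists_gmax_eq (a := a) (b := b) N x
    exact ⟨k, hk, he⟩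
  exact Nat.sInf_mem hne

lemma sel_eq_iff (N : ℕ) (x : E) (k : ℕ) :
    sel a b N x = k ↔ (k ≤ N ∧ af a b k x = gmax a b N x) ∧
      ∀ j < k, ¬(j ≤ N ∧ af a b j x = gmax a b N x) := by
  set S := {k | k ≤ N ∧ af a b k x = gmax a b N x} with hS
  have hne : S.Nonempty := by
    obtain ⟨k, hk, he⟩ := exists_gmax_eq (a := a) (b := b) N x
    exact ⟨k, hk, he⟩
  constructor
  · rintro rfl
    refine ⟨Nat.sInf_mem hne, fun j hj hmem => ?_⟩
    have h1 : sInf S ≤ j := Nat.sInf_le hmem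
    have h2 : sel a b N x = sInf S := rfl
    omega
  · rintro ⟨hk, hmin⟩
    refine le_antisymm (Nat.sInf_le hk) ?_
    by_contra h
    push_neg at h
    exact hmin _ h (Nat.sInf_mem hne)

variable [MeasurableSpace E] [BorelSpace E]

lemma measurable_sel (N : ℕ) : Measurable (fun x => sel a b N x) := by
  apply measurable_to_countable'
  intro k
  have : (fun x => sel a b N x) ⁻¹' {k} =
      {x | (k ≤ N ∧ af a b k x = gmax a b N x)} ∩
        ⋂ j ∈ Finset.range k, {x | ¬(j ≤ N ∧ af a b j x = gmax a b N x)} := by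
    ext x
    simp only [mem_preimage, mem_singleton_iff, sel_eq_iff, mem_inter_iff, mem_setOf_eq,
      mem_iInter, Finset.mem_range]
  rw [this]
  have hmeas : ∀ j : ℕ, MeasurableSet {x : E | j ≤ N ∧ af a b j x = gmax a b N x} := by
    intro j
    by_cases hj : j ≤ N
    · have : {x : E | j ≤ N ∧ af a b j x = gmax a b N x}
          = {x : E | af a b j x = gmax a b N x} := by ext x; simp [hj]
      rw [this]
      exact measurableSet_eq_fun (af_continuous j).measurable (gmax_continuous N).measurable
    · have : {x : E | j ≤ N ∧ af a b j x = gmax a b N x} = ∅ := by ext x; simp [hj]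
      rw [this]; exact MeasurableSet.empty
  exact (hmeas k).inter (MeasurableSet.biInter (Finset.range k).countable_toSet
    fun j _ => (hmeas j).compl)

end Stmt9Aux

section Stmt9BS
variable {E : Type*} [NormedAddCommGroup E] [InnerProductSpace ℝ E] [CompleteSpace E]
variable {Ω : Type*} [MeasurableSpace Ω]

section Exponents

variable {r s : ℝ} (hr : 2 ≤ r) (hs : s = r / (r - 1))

lemma stmt9_conj (hr : 2 ≤ r) (hs : s = r / (r - 1)) : s.HolderConjugate r := by
  have hrm1 : (0:ℝ) < r - 1 := by linarith
  exact ((Real.holderConjugate_iff_eq_conjExponent (by linarith)).mpr hs).symm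

end Exponents

/-- Hölder integrability of the inner product pairing. -/
lemma stmt9_integrable_inner {r s : ℝ} (hr : 2 ≤ r) (hs : s = r / (r - 1))
    {μ : Measure Ω} {f w : Ω → E} (hf : MemLp f (ENNReal.ofReal s) μ)
    (hw : MemLp w (ENNReal.ofReal r) μ) :
    Integrable (fun x => ⟪f x, w x⟫) μ := by
  have hconj := stmt9_conj hr hs
  have hs0 : 0 < s := hconj.pos
  have hr0 : (0:ℝ) < r := by linarith
  have hfs : Integrable (fun x => ‖f x‖ ^ s) μ := by
    have := hf.integrable_norm_rpow (by simpa using hs0) ENNReal.ofReal_ne_top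
    rwa [ENNReal.toReal_ofReal hs0.le] at this
  have hwr : Integrable (fun x => ‖w x‖ ^ r) μ := by
    have := hw.integrable_norm_rpow (by simpa using hr0) ENNReal.ofReal_ne_top
    rwa [ENNReal.toReal_ofReal hr0.le] at this
  apply Integrable.mono' ((hfs.div_const s).add (hwr.div_const r)) (hf.1.inner hw.1)
  filter_upwards with x
  calc ‖⟪f x, w x⟫‖ ≤ ‖f x‖ * ‖w x‖ := by
        rw [Real.norm_eq_abs]; exact abs_real_inner_le_norm _ _
    _ ≤ ‖f x‖ ^ s / s + ‖w x‖ ^ r / r :=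
        Real.young_inequality_of_nonneg (norm_nonneg _) (norm_nonneg _) hconj

/-- Uniform bound on `∫ ‖vn n‖ ^ r` from weak convergence, via Banach–Steinhaus. -/
lemma stmt9_norm_bound {μ : Measure Ω} [IsFiniteMeasure μ]
    {r s : ℝ} (hr : 2 ≤ r) (hs : s = r / (r - 1))
    (v : Ω → E) (vn : ℕ → Ω → E)
    (hv : MemLp v (ENNReal.ofReal r) μ)
    (hvn : ∀ n, MemLp (vn n) (ENNReal.ofReal r) μ)
    (hweak : ∀ f : Ω → E, MemLp f (ENNReal.ofReal s) μ →
      Tendsto (fun n => ∫ x, ⟪f x, vn n x⟫ ∂μ) atTop (nhds (∫ x, ⟪f x, v x⟫ ∂μ))) :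
    ∃ B : ℝ, ∀ n, ∫ x, ‖vn n x‖ ^ r ∂μ ≤ B := by
  have hconj := stmt9_conj hr hs
  have hs0 : 0 < s := hconj.pos
  have hs1 : 1 < s := hconj.lt
  have hr0 : (0:ℝ) < r := by linarith
  have hr1 : (1:ℝ) < r := by linarith
  have hsr : s * (r - 1) = r := by
    rw [hs]; exact div_mul_cancel₀ r (by linarith : r - 1 ≠ 0)
  set p : ℝ≥0∞ := ENNReal.ofReal s with hp
  have hp_ne0 : p ≠ 0 := by rw [hp]; exact (ENNReal.ofReal_pos.2 hs0).ne'
  have hp_ne_top : p ≠ ∞ := ENNReal.ofReal_ne_top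
  have hp_toReal : p.toReal = s := ENNReal.toReal_ofReal hs0.le
  haveI : Fact (1 ≤ p) := ⟨by
    rw [hp, ← ENNReal.ofReal_one]
    exact ENNReal.ofReal_le_ofReal hs1.le⟩
  set Ir : ℕ → ℝ := fun n => ∫ x, ‖vn n x‖ ^ r ∂μ with hIr
  have hIr_nonneg : ∀ n, 0 ≤ Ir n := fun n =>
    integral_nonneg fun x => Real.rpow_nonneg (norm_nonneg _) r
  -- norm of an Lp element as an integral
  have hLpnorm : ∀ φ : Lp E p μ, ‖φ‖ = (∫ x, ‖φ x‖ ^ s ∂μ) ^ s⁻¹ := by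
    intro φ
    rw [Lp.norm_def, (Lp.memLp φ).eLpNorm_eq_integral_rpow_norm hp_ne0 hp_ne_top,
      ENNReal.toReal_ofReal (Real.rpow_nonneg (integral_nonneg fun x =>
        Real.rpow_nonneg (norm_nonneg _) _) _), hp_toReal]
  -- the continuous linear functionals
  have hTbound : ∀ n (φ : Lp E p μ), ‖∫ x, ⟪φ x, vn n x⟫ ∂μ‖ ≤ (Ir n) ^ r⁻¹ * ‖φ‖ := by
    intro n φ
    have h1 : ‖∫ x, ⟪φ x, vn n x⟫ ∂μ‖ ≤ ∫ x, ‖⟪φ x, vn n x⟫‖ ∂μ := norm_integral_le_integral_norm _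
    have hφs : Integrable (fun x => ‖(φ : Ω → E) x‖ ^ s) μ := by
      have := (Lp.memLp φ).integrable_norm_rpow hp_ne0 hp_ne_top
      rwa [hp_toReal] at this
    have hwr : Integrable (fun x => ‖vn n x‖ ^ r) μ := by
      have := (hvn n).integrable_norm_rpow (ENNReal.ofReal_pos.2 hr0).ne' ENNReal.ofReal_ne_top
      rwa [ENNReal.toReal_ofReal hr0.le] at this
    have h2 : ∫ x, ‖⟪φ x, vn n x⟫‖ ∂μ ≤ ∫ x, ‖φ x‖ * ‖vn n x‖ ∂μ := by
      apply integral_mono (stmt9_integrable_inner hr hs (Lp.memLp φ) (hvn n)).norm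
      · apply Integrable.mono' ((hφs.div_const s).add (hwr.div_const r))
          ((Lp.memLp φ).1.norm.mul (hvn n).1.norm)
        filter_upwards with x
        have := Real.young_inequality_of_nonneg (norm_nonneg ((φ : Ω → E) x))
          (norm_nonneg (vn n x)) hconj
        simpa [Real.norm_eq_abs,
          abs_of_nonneg (mul_nonneg (norm_nonneg ((φ : Ω → E) x)) (norm_nonneg (vn n x)))]
          using this
      · intro x
        simpa [Real.norm_eq_abs] using abs_real_inner_le_norm ((φ : Ω → E) x) (vn n x)
    have h3 : ∫ x, ‖φ x‖ * ‖vn n x‖ ∂μ ≤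
        (∫ x, ‖φ x‖ ^ s ∂μ) ^ (1 / s) * (∫ x, ‖vn n x‖ ^ r ∂μ) ^ (1 / r) :=
      integral_mul_norm_le_Lp_mul_Lq hconj (Lp.memLp φ) (hvn n)
    rw [hLpnorm φ]
    calc ‖∫ x, ⟪φ x, vn n x⟫ ∂μ‖ ≤ (∫ x, ‖φ x‖ ^ s ∂μ) ^ (1 / s) * (Ir n) ^ (1 / r) := by
          refine le_trans h1 (le_trans h2 ?_); simp only [hIr]; exact h3
      _ = (Ir n) ^ r⁻¹ * (∫ x, ‖φ x‖ ^ s ∂μ) ^ s⁻¹ := by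
          rw [one_div, one_div, mul_comm]
  set T : ℕ → Lp E p μ →L[ℝ] ℝ := fun n =>
    LinearMap.mkContinuous
      { toFun := fun φ => ∫ x, ⟪φ x, vn n x⟫ ∂μ
        map_add' := by
          intro φ ψ
          have hae : ∀ᵐ x ∂μ, ⟪(↑(φ + ψ) : Ω → E) x, vn n x⟫ =
              ⟪φ x, vn n x⟫ + ⟪ψ x, vn n x⟫ := by
            filter_upwards [Lp.coeFn_add φ ψ] with x hx
            rw [hx]; exact inner_add_left _ _ _
          rw [integral_congr_ae hae, integral_add
            (stmt9_integrable_inner hr hs (Lp.memLp φ) (hvn n))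
            (stmt9_integrable_inner hr hs (Lp.memLp ψ) (hvn n))]
        map_smul' := by
          intro c φ
          have hae : ∀ᵐ x ∂μ, ⟪(↑(c • φ) : Ω → E) x, vn n x⟫ = c * ⟪φ x, vn n x⟫ := by
            filter_upwards [Lp.coeFn_smul c φ] with x hx
            rw [hx]; exact real_inner_smul_left _ _ _
          rw [integral_congr_ae hae, integral_const_mul]
          rfl }
      ((Ir n) ^ r⁻¹) (fun φ => hTbound n φ) with hT
  have hTapp : ∀ n (φ : Lp E p μ), T n φ = ∫ x, ⟪φ x, vn n x⟫ ∂μ := fun n φ => rfl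
  -- pointwise boundedness
  have hpt : ∀ φ : Lp E p μ, ∃ Cφ : ℝ, ∀ n, ‖T n φ‖ ≤ Cφ := by
    intro φ
    have := (hweak φ (Lp.memLp φ)).norm.bddAbove_range
    obtain ⟨Cφ, hCφ⟩ := this
    exact ⟨Cφ, fun n => hCφ ⟨n, by rw [hTapp]⟩⟩
  obtain ⟨C', hC'⟩ := banach_steinhaus hpt
  have hC'0 : 0 ≤ C' := le_trans (norm_nonneg _) (hC' 0)
  refine ⟨C' ^ r, ?_⟩
  intro n
  show Ir n ≤ C' ^ r
  -- evaluate T n at the dual element of vn n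
  set fn : Ω → E := fun x => ‖vn n x‖ ^ (r - 2) • vn n x with hfn
  have hrpow_aux : ∀ (t c : ℝ), 0 ≤ t → c + 1 ≠ 0 → t ^ c * t = t ^ (c + 1) := by
    intro t c ht hc
    rcases eq_or_lt_of_le ht with h | h
    · rw [← h, Real.zero_rpow hc, mul_zero]
    · rw [Real.rpow_add h, Real.rpow_one]
  have hfn_norm : ∀ x, ‖fn x‖ = ‖vn n x‖ ^ (r - 1) := by
    intro x
    rw [hfn, norm_smul, Real.norm_eq_abs, abs_of_nonneg (Real.rpow_nonneg (norm_nonneg _) _)]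
    have := hrpow_aux ‖vn n x‖ (r - 2) (norm_nonneg _) (by intro h; linarith)
    rw [show r - 2 + 1 = r - 1 by ring] at this
    exact this
  have hfn_mem : MemLp fn p μ := by
    constructor
    · exact (Continuous.comp_aestronglyMeasurable
        ((continuous_norm.rpow_const fun y => Or.inr (by linarith)).smul continuous_id)
        (hvn n).1)
    · have h1 : eLpNorm fn p μ = eLpNorm (fun x => ‖vn n x‖ ^ (r - 1)) p μ := by
        rw [← eLpNorm_norm fn]
        congr 1
        funext x
        exact hfn_norm x
      rw [h1, eLpNorm_norm_rpow (vn n) (by linarith : (0:ℝ) < r - 1)]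
      have h2 : p * ENNReal.ofReal (r - 1) = ENNReal.ofReal r := by
        rw [hp, ← ENNReal.ofReal_mul hs0.le, hsr]
      rw [h2]
      exact ENNReal.rpow_lt_top_of_nonneg (by linarith) (hvn n).2.ne
  have heval : T n (hfn_mem.toLp fn) = Ir n := by
    rw [hTapp]
    have hae : ∀ᵐ x ∂μ, ⟪(hfn_mem.toLp fn : Ω → E) x, vn n x⟫ = ‖vn n x‖ ^ r := by
      filter_upwards [hfn_mem.coeFn_toLp] with x hx
      rw [hx, hfn, real_inner_smul_left, real_inner_self_eq_norm_mul_norm]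
      rw [← mul_assoc, hrpow_aux ‖vn n x‖ (r - 2) (norm_nonneg _)
        (by intro h; linarith), show r - 2 + 1 = r - 1 by ring,
        hrpow_aux ‖vn n x‖ (r - 1) (norm_nonneg _) (by intro h; linarith),
        show r - 1 + 1 = r by ring]
    rw [integral_congr_ae hae]
  have hnormfn : ‖hfn_mem.toLp fn‖ = (Ir n) ^ s⁻¹ := by
    rw [Lp.norm_toLp, hfn_mem.eLpNorm_eq_integral_rpow_norm hp_ne0 hp_ne_top, hp_toReal,
      ENNReal.toReal_ofReal (Real.rpow_nonneg (integral_nonneg fun x =>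
        Real.rpow_nonneg (norm_nonneg _) _) _)]
    congr 1
    rw [hIr]
    apply integral_congr_ae
    filter_upwards with x
    rw [hfn_norm x, ← Real.rpow_mul (norm_nonneg _),
      show (r - 1) * s = r by rw [mul_comm]; exact hsr]

  -- combine
  have hIr_le : Ir n ≤ C' * (Ir n) ^ s⁻¹ := by
    have h4 := (T n).le_opNorm (hfn_mem.toLp fn)
    rw [heval, hnormfn] at h4
    calc Ir n ≤ ‖Ir n‖ := by rw [Real.norm_eq_abs]; exact le_abs_self _
      _ ≤ ‖T n‖ * (Ir n) ^ s⁻¹ := h4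
      _ ≤ C' * (Ir n) ^ s⁻¹ :=
          mul_le_mul_of_nonneg_right (hC' n) (Real.rpow_nonneg (hIr_nonneg n) _)
  rcases eq_or_lt_of_le (hIr_nonneg n) with h0 | h0
  · rw [← h0]; exact Real.rpow_nonneg hC'0 r
  · have hsum : s⁻¹ + r⁻¹ = 1 := hconj.inv_add_inv_eq_one
    have hsplit : Ir n = (Ir n) ^ r⁻¹ * (Ir n) ^ s⁻¹ := by
      rw [← Real.rpow_add h0, add_comm, hsum, Real.rpow_one]
    have hpos : 0 < (Ir n) ^ s⁻¹ := Real.rpow_pos_of_pos h0 _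
    have hIrr : (Ir n) ^ r⁻¹ ≤ C' := by
      have h5 : (Ir n) ^ r⁻¹ * (Ir n) ^ s⁻¹ ≤ C' * (Ir n) ^ s⁻¹ := by
        rw [← hsplit]; exact hIr_le
      exact le_of_mul_le_mul_right h5 hpos
    have h6 : Ir n = ((Ir n) ^ r⁻¹) ^ r := by
      rw [← Real.rpow_mul h0.le, inv_mul_cancel₀ (ne_of_gt hr0), Real.rpow_one]
    rw [h6]
    exact Real.rpow_le_rpow (Real.rpow_nonneg h0.le _) hIrr hr0.le

end Stmt9BS

open Stmt9Aux

/-- weak lower semicontinuity of the convex integral functional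
v ↦ ∫ g(v) dμ along sequences converging weakly in Lʳ(μ; ℝᵈ). -/
theorem stmt_9 {Ω : Type*} [MeasurableSpace Ω] (μ : Measure Ω) [IsFiniteMeasure μ]
    (d : ℕ) (hd : 1 ≤ d) (r s : ℝ) (hr : 2 ≤ r) (hs : s = r / (r - 1))
    (C : ℝ) (hC : 0 < C)
    (g : EuclideanSpace ℝ (Fin d) → ℝ)
    (hgconv : ConvexOn ℝ univ g) (hgcont : Continuous g)
    (hgnn : ∀ x : EuclideanSpace ℝ (Fin d), 0 ≤ g x)
    (hgb : ∀ x : EuclideanSpace ℝ (Fin d), g x ≤ C * (1 + ‖x‖ ^ r))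
    (v : Ω → EuclideanSpace ℝ (Fin d)) (vn : ℕ → Ω → EuclideanSpace ℝ (Fin d))
    (hv : MemLp v (ENNReal.ofReal r) μ)
    (hvn : ∀ n, MemLp (vn n) (ENNReal.ofReal r) μ)
    (hweak : ∀ f : Ω → EuclideanSpace ℝ (Fin d), MemLp f (ENNReal.ofReal s) μ →
      Tendsto (fun n => ∫ x, ⟪f x, vn n x⟫ ∂μ) atTop (nhds (∫ x, ⟪f x, v x⟫ ∂μ))) :
    (∫ x, g (v x) ∂μ) ≤ liminf (fun n => ∫ x, g (vn n x) ∂μ) atTop := by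
  have hr0 : (0:ℝ) < r := by linarith
  have hofr_ne0 : ENNReal.ofReal r ≠ 0 := (ENNReal.ofReal_pos.2 hr0).ne'
  -- integrability of ‖w‖^r for w ∈ Lʳ
  have hnorm_r_int : ∀ w : Ω → EuclideanSpace ℝ (Fin d), MemLp w (ENNReal.ofReal r) μ →
      Integrable (fun x => ‖w x‖ ^ r) μ := by
    intro w hw
    have := hw.integrable_norm_rpow hofr_ne0 ENNReal.ofReal_ne_top
    rwa [ENNReal.toReal_ofReal hr0.le] at this
  -- integrability of g ∘ w for w ∈ Lʳ
  have hg_int : ∀ w : Ω → EuclideanSpace ℝ (Fin d), MemLp w (ENNReal.ofReal r) μ →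
      Integrable (fun x => g (w x)) μ := by
    intro w hw
    apply Integrable.mono' (((integrable_const (1:ℝ)).add (hnorm_r_int w hw)).const_mul C)
      (hgcont.comp_aestronglyMeasurable hw.1)
    filter_upwards with x
    rw [Real.norm_eq_abs, abs_of_nonneg (hgnn _)]
    exact hgb (w x)
  -- uniform bound via Banach–Steinhaus
  obtain ⟨B, hB⟩ := stmt9_norm_bound hr hs v vn hv hvn hweak
  have hg_bdd : ∀ n, ∫ x, g (vn n x) ∂μ ≤ C * ((μ univ).toReal + B) := by
    intro n
    have h1 : ∫ x, g (vn n x) ∂μ ≤ ∫ x, C * (1 + ‖vn n x‖ ^ r) ∂μ := by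
      apply integral_mono (hg_int _ (hvn n))
        (((integrable_const (1:ℝ)).add (hnorm_r_int _ (hvn n))).const_mul C)
      intro x
      exact hgb (vn n x)
    have h2 : ∫ x, C * (1 + ‖vn n x‖ ^ r) ∂μ
        = C * ((μ univ).toReal + ∫ x, ‖vn n x‖ ^ r ∂μ) := by
      rw [integral_const_mul, integral_add (integrable_const _) (hnorm_r_int _ (hvn n))]
      simp [Measure.real]
    have h3 : (0:ℝ) ≤ ∫ x, ‖vn n x‖ ^ r ∂μ :=
      integral_nonneg fun x => Real.rpow_nonneg (norm_nonneg (vn n x)) r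
    calc ∫ x, g (vn n x) ∂μ ≤ C * ((μ univ).toReal + ∫ x, ‖vn n x‖ ^ r ∂μ) := by
          rw [← h2]; exact h1
      _ ≤ C * ((μ univ).toReal + B) := by
          apply mul_le_mul_of_nonneg_left _ hC.le
          exact add_le_add le_rfl (hB n)
  have hbdd_above : IsBoundedUnder (· ≤ ·) atTop (fun n => ∫ x, g (vn n x) ∂μ) :=
    isBoundedUnder_of ⟨C * ((μ univ).toReal + B), fun n => hg_bdd n⟩
  have hbdd_below : IsBoundedUnder (· ≥ ·) atTop (fun n => ∫ x, g (vn n x) ∂μ) :=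
    isBoundedUnder_of ⟨0, fun n => integral_nonneg fun x => hgnn _⟩
  -- the countable family of affine minorants
  obtain ⟨a, b, hab, hdense⟩ := exists_countable_minorant_family g hgconv hgcont
  have haf : ∀ k (x : EuclideanSpace ℝ (Fin d)), af a b k x = ⟪a k, x⟫ + b k := fun _ _ => rfl
  have hgm_le_g : ∀ N (x : EuclideanSpace ℝ (Fin d)), gmax a b N x ≤ g x := fun N x =>
    gmax_le (fun k y => hab k y) N x
  have hv_meas : AEMeasurable v μ := hv.1.aemeasurable
  -- key step : ∫ gmax N (v ·) ≤ liminf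
  have key : ∀ N : ℕ, ∫ x, gmax a b N (v x) ∂μ ≤
      liminf (fun n => ∫ x, g (vn n x) ∂μ) atTop := by
    intro N
    set fN : Ω → EuclideanSpace ℝ (Fin d) := fun ω => a (sel a b N (v ω)) with hfN
    set βN : Ω → ℝ := fun ω => b (sel a b N (v ω)) with hβN
    have hselm : Measurable fun x : EuclideanSpace ℝ (Fin d) => sel a b N x := measurable_sel N
    have hfN_aesm : AEStronglyMeasurable fN μ :=
      ((measurable_from_top.comp hselm).comp_aemeasurable hv_meas).aestronglyMeasurable
    have hβN_aesm : AEStronglyMeasurable βN μ :=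
      ((measurable_from_top.comp hselm).comp_aemeasurable hv_meas).aestronglyMeasurable
    have hselN_le : ∀ x : EuclideanSpace ℝ (Fin d), sel a b N x ≤ N := fun x => (sel_mem N x).1
    have hfN_mem : MemLp fN (ENNReal.ofReal s) μ := by
      apply MemLp.of_bound hfN_aesm
        ((Finset.range (N+1)).sup' Finset.nonempty_range_add_one fun k => ‖a k‖)
      filter_upwards with ω
      exact Finset.le_sup' (fun k => ‖a k‖)
        (Finset.mem_range.2 (Nat.lt_succ_of_le (hselN_le (v ω))))
    have hβN_int : Integrable βN μ := by
      rw [← memLp_one_iff_integrable]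
      apply MemLp.of_bound hβN_aesm
        ((Finset.range (N+1)).sup' Finset.nonempty_range_add_one fun k => ‖b k‖)
      filter_upwards with ω
      exact Finset.le_sup' (fun k => ‖b k‖)
        (Finset.mem_range.2 (Nat.lt_succ_of_le (hselN_le (v ω))))
    have hinner_int : ∀ w : Ω → EuclideanSpace ℝ (Fin d), MemLp w (ENNReal.ofReal r) μ →
        Integrable (fun ω => ⟪fN ω, w ω⟫) μ := fun w hw =>
      stmt9_integrable_inner hr hs hfN_mem hw
    have hmono : ∀ n, ∫ ω, (⟪fN ω, vn n ω⟫ + βN ω) ∂μ ≤ ∫ x, g (vn n x) ∂μ := by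
      intro n
      apply integral_mono ((hinner_int _ (hvn n)).add hβN_int) (hg_int _ (hvn n))
      intro ω
      exact hab _ _
    have htends : Tendsto (fun n => ∫ ω, (⟪fN ω, vn n ω⟫ + βN ω) ∂μ) atTop
        (nhds (∫ ω, (⟪fN ω, v ω⟫ + βN ω) ∂μ)) := by
      have h1 : ∀ n, ∫ ω, (⟪fN ω, vn n ω⟫ + βN ω) ∂μ
          = (∫ ω, ⟪fN ω, vn n ω⟫ ∂μ) + ∫ ω, βN ω ∂μ := fun n =>
        integral_add (hinner_int _ (hvn n)) hβN_int
      have h2 : ∫ ω, (⟪fN ω, v ω⟫ + βN ω) ∂μ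
          = (∫ ω, ⟪fN ω, v ω⟫ ∂μ) + ∫ ω, βN ω ∂μ :=
        integral_add (hinner_int _ hv) hβN_int
      rw [h2]
      simp only [h1]
      exact (hweak fN hfN_mem).add tendsto_const_nhds
    have heqv : ∫ ω, (⟪fN ω, v ω⟫ + βN ω) ∂μ = ∫ x, gmax a b N (v x) ∂μ := by
      apply integral_congr_ae
      filter_upwards with ω
      exact (sel_mem N (v ω)).2
    have hlim : ∫ x, gmax a b N (v x) ∂μ
        = liminf (fun n => ∫ ω, (⟪fN ω, vn n ω⟫ + βN ω) ∂μ) atTop := by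
      rw [← heqv]
      exact htends.liminf_eq.symm
    rw [hlim]
    exact liminf_le_liminf (Eventually.of_forall hmono)
      htends.isBoundedUnder_ge hbdd_above.isCoboundedUnder_ge
  -- integrability of gmax N (v ·)
  have haf0_int : Integrable (fun ω => af a b 0 (v ω)) μ := by
    have h1 : Integrable (fun ω => ⟪a 0, v ω⟫) μ :=
      stmt9_integrable_inner hr hs (memLp_const (a 0)) hv
    simpa [haf] using h1.add (integrable_const (b 0))
  have hint_gmax : ∀ N, Integrable (fun x => gmax a b N (v x)) μ := by
    intro N
    apply Integrable.mono' ((hg_int v hv).abs.add haf0_int.abs)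
      ((gmax_continuous N).comp_aestronglyMeasurable hv.1)
    filter_upwards with ω
    have h1 : af a b 0 (v ω) ≤ gmax a b N (v ω) := af_le_gmax N 0 (Nat.zero_le N) (v ω)
    have h2 : gmax a b N (v ω) ≤ g (v ω) := hgm_le_g N (v ω)
    rw [Real.norm_eq_abs, abs_le]
    simp only [Pi.add_apply]
    have e1 := neg_abs_le (af a b 0 (v ω))
    have e2 := le_abs_self (g (v ω))
    have e3 := abs_nonneg (g (v ω))
    have e4 := abs_nonneg (af a b 0 (v ω))
    constructor
    · linarith
    · linarith
  -- pointwise monotone convergence gmax N x → g x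
  have htendsto_pt : ∀ x : EuclideanSpace ℝ (Fin d), Tendsto (fun N => gmax a b N x) atTop (nhds (g x)) := by
    intro x
    have hbdd : BddAbove (range fun N => gmax a b N x) := by
      refine ⟨g x, ?_⟩
      rintro _ ⟨N, rfl⟩
      exact hgm_le_g N x
    have hsup := tendsto_atTop_ciSup (gmax_mono x) hbdd
    have hsupeq : ⨆ N, gmax a b N x = g x := by
      apply le_antisymm (ciSup_le fun N => hgm_le_g N x)
      by_contra h
      push_neg at h
      obtain ⟨k, hk⟩ := hdense x (g x - ⨆ N, gmax a b N x) (by linarith)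
      have h1 : af a b k x ≤ gmax a b k x := af_le_gmax k k le_rfl x
      have h2 : gmax a b k x ≤ ⨆ N, gmax a b N x := le_ciSup hbdd k
      rw [haf] at h1
      linarith
    rwa [hsupeq] at hsup
  have hMCT := integral_tendsto_of_tendsto_of_monotone hint_gmax (hg_int v hv)
    (ae_of_all _ fun ω => gmax_mono (v ω)) (ae_of_all _ fun ω => htendsto_pt (v ω))
  exact le_of_tendsto' hMCT key
end

section
/- Let (Ω, μ) be a finite measure space with μ(Ω) > 0, d ≥ 1, r ≥ 2, and s = r/(r−1). Let Ψ : [0,∞) → ℝ be continuous, convex, nondecreasing on [0,∞) and strictly increasing on (0,∞), and suppose there exist constants c₀, C₀, C₁ > 0 such that c₀·a^{r/2} − C₀ ≤ Ψ(a) ≤ C₁(1 + a^{r/2}) for all a ≥ 0. Let û ∈ Lʳ(μ; ℝᵈ), f₀ ∈ Lˢ(μ; ℝᵈ), and let V be a closed linear subspace of Lʳ(μ; ℝᵈ). Define the energy E(v) = ∫_Ω Ψ(‖v + û‖²) dμ − ∫_Ω f₀·(v + û) dμ for v ∈ V. Then E admits a unique global minimizer on V. -/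
set_option maxHeartbeats 1600000

open Set MeasureTheory
open scoped RealInnerProductSpace

open Set MeasureTheory
open scoped RealInnerProductSpace

theorem norm_sq_midpoint {F : Type*} [NormedAddCommGroup F] [InnerProductSpace ℝ F]
    (X Y : F) :
    ‖(2⁻¹:ℝ) • (X + Y)‖^2 = (‖X‖^2 + ‖Y‖^2)/2 - ‖(2⁻¹:ℝ) • (X - Y)‖^2 := by
  have hpar := parallelogram_law_with_norm ℝ X Y
  have h1 : ‖(2⁻¹:ℝ) • (X + Y)‖ = 2⁻¹ * ‖X + Y‖ := by
    rw [norm_smul]; simp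
  have h2 : ‖(2⁻¹:ℝ) • (X - Y)‖ = 2⁻¹ * ‖X - Y‖ := by
    rw [norm_smul]; simp
  rw [h1, h2]
  nlinarith [hpar]

theorem vec_gain {F : Type*} [NormedAddCommGroup F] [InnerProductSpace ℝ F]
    {Ψ : ℝ → ℝ} (hΨconv : ConvexOn ℝ (Ici 0) Ψ) (X Y : F) :
    Ψ ((‖X‖^2 + ‖Y‖^2)/2) - Ψ ((‖X‖^2 + ‖Y‖^2)/2 - ‖(2⁻¹:ℝ) • (X - Y)‖^2)
      ≤ (Ψ (‖X‖^2) + Ψ (‖Y‖^2))/2 - Ψ (‖(2⁻¹:ℝ) • (X + Y)‖^2) := by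
  have hmid := norm_sq_midpoint X Y
  have hconv := hΨconv.2 (mem_Ici.2 (sq_nonneg ‖X‖)) (mem_Ici.2 (sq_nonneg ‖Y‖))
    (by norm_num : (0:ℝ) ≤ 1/2) (by norm_num : (0:ℝ) ≤ 1/2) (by norm_num)
  simp only [smul_eq_mul] at hconv
  rw [hmid]
  have : (1:ℝ)/2 * ‖X‖^2 + 1/2 * ‖Y‖^2 = (‖X‖^2 + ‖Y‖^2)/2 := by ring
  rw [this] at hconv
  linarith

theorem delta_le_t {F : Type*} [NormedAddCommGroup F] [InnerProductSpace ℝ F]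
    (X Y : F) : ‖(2⁻¹:ℝ) • (X - Y)‖^2 ≤ (‖X‖^2 + ‖Y‖^2)/2 := by
  have := norm_sq_midpoint X Y
  nlinarith [sq_nonneg ‖(2⁻¹:ℝ) • (X + Y)‖]

theorem sq_rpow_helper {r : ℝ} (hr : 0 < r) (n : ℝ) (hn : 0 ≤ n) :
    (n^2) ^ (r/2) = n ^ r := by
  rw [show (n:ℝ)^2 = n ^ ((2:ℕ):ℝ) by rw [Real.rpow_natCast],
    ← Real.rpow_mul hn]
  norm_num
  rw [show (2:ℝ)*(r/2) = r by ring]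

theorem integrable_psi_comp {Ω : Type*} [MeasurableSpace Ω] {μ : Measure Ω}
    [IsFiniteMeasure μ] {F : Type*} [NormedAddCommGroup F]
    {Ψ : ℝ → ℝ} {r c₀ C₀ C₁ : ℝ} (hr : 2 ≤ r)
    (hΨcont : ContinuousOn Ψ (Ici 0))
    (hlow : ∀ a : ℝ, 0 ≤ a → c₀ * a ^ (r / 2) - C₀ ≤ Ψ a)
    (hup : ∀ a : ℝ, 0 ≤ a → Ψ a ≤ C₁ * (1 + a ^ (r / 2)))
    (hc₀ : 0 < c₀) (hC₀ : 0 < C₀) (hC₁ : 0 < C₁)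
    {g : Ω → F} (hg : MemLp g (ENNReal.ofReal r) μ) :
    Integrable (fun x => Ψ (‖g x‖^2)) μ := by
  have hr0 : (0:ℝ) < r := by linarith
  have hp0 : ENNReal.ofReal r ≠ 0 := by
    simp [ENNReal.ofReal_eq_zero]; linarith
  have hptop : ENNReal.ofReal r ≠ ⊤ := ENNReal.ofReal_ne_top
  have htoReal : (ENNReal.ofReal r).toReal = r := ENNReal.toReal_ofReal hr0.le
  have hΨc : Continuous fun a : ℝ => Ψ (max a 0) := by
    apply hΨcont.comp_continuous (continuous_id.max continuous_const)
    intro x; exact mem_Ici.2 (le_max_right _ _)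
  have hsqm : AEStronglyMeasurable (fun x => (‖g x‖^2 : ℝ)) μ :=
    (continuous_pow 2).comp_aestronglyMeasurable hg.1.norm
  have hmeas : AEStronglyMeasurable (fun x => Ψ (‖g x‖^2)) μ := by
    have := hΨc.comp_aestronglyMeasurable hsqm
    apply this.congr
    filter_upwards with x
    simp [Function.comp, max_eq_left (sq_nonneg ‖g x‖)]
  have hdom : Integrable (fun x => (C₀ + C₁) + C₁ * ‖g x‖ ^ r) μ := by
    apply (integrable_const _).add
    have := (hg.integrable_norm_rpow hp0 hptop).const_mul C₁
    rwa [htoReal] at this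
  apply hdom.mono' hmeas
  filter_upwards with x
  have ha : (0:ℝ) ≤ ‖g x‖^2 := sq_nonneg _
  have hrp : ((‖g x‖^2)) ^ (r/2) = ‖g x‖ ^ r := sq_rpow_helper hr0 _ (norm_nonneg _)
  have h1 := hlow _ ha
  have h2 := hup _ ha
  rw [hrp] at h1 h2
  have hnn : (0:ℝ) ≤ ‖g x‖ ^ r := Real.rpow_nonneg (norm_nonneg _) r
  rw [Real.norm_eq_abs, abs_le]
  constructor <;> nlinarith

open Set MeasureTheory
open scoped RealInnerProductSpace

theorem integrable_inner_pair {Ω : Type*} [MeasurableSpace Ω] {μ : Measure Ω}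
    {F : Type*} [NormedAddCommGroup F] [InnerProductSpace ℝ F]
    {f₀ g : Ω → F} {s r : ℝ} (hsr : Real.HolderConjugate s r)
    (hf₀ : MemLp f₀ (ENNReal.ofReal s) μ) (hg : MemLp g (ENNReal.ofReal r) μ) :
    Integrable (fun x => ⟪f₀ x, g x⟫) μ := by
  have hs0 : (0:ℝ) < s := hsr.pos
  have hr0 : (0:ℝ) < r := hsr.symm.pos
  have h1 : Integrable (fun x => ‖f₀ x‖ ^ s) μ := by
    have := hf₀.integrable_norm_rpow (by simp [ENNReal.ofReal_eq_zero]; linarith)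
      ENNReal.ofReal_ne_top
    rwa [ENNReal.toReal_ofReal hs0.le] at this
  have h2 : Integrable (fun x => ‖g x‖ ^ r) μ := by
    have := hg.integrable_norm_rpow (by simp [ENNReal.ofReal_eq_zero]; linarith)
      ENNReal.ofReal_ne_top
    rwa [ENNReal.toReal_ofReal hr0.le] at this
  apply ((h1.div_const s).add (h2.div_const r)).mono'
    (hf₀.1.inner hg.1)
  filter_upwards with x
  calc ‖(⟪f₀ x, g x⟫ : ℝ)‖ = |(⟪f₀ x, g x⟫ : ℝ)| := rfl
    _ ≤ ‖f₀ x‖ * ‖g x‖ := abs_real_inner_le_norm _ _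
    _ ≤ ‖f₀ x‖ ^ s / s + ‖g x‖ ^ r / r :=
        Real.young_inequality_of_nonneg (norm_nonneg _) (norm_nonneg _) hsr

theorem inner_young_bound {F : Type*} [NormedAddCommGroup F] [InnerProductSpace ℝ F]
    {s r : ℝ} (hsr : Real.HolderConjugate s r) {K : ℝ} (hK : 0 < K) (a b : F) :
    (⟪a, b⟫ : ℝ) ≤ K ^ s * ‖a‖ ^ s / s + (K ^ r)⁻¹ * ‖b‖ ^ r / r := by
  have h1 : (⟪a, b⟫ : ℝ) ≤ ‖a‖ * ‖b‖ := real_inner_le_norm a b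
  have h2 : ‖a‖ * ‖b‖ = (K * ‖a‖) * (‖b‖ / K) := by field_simp
  have h3 := Real.young_inequality_of_nonneg
    (by positivity : (0:ℝ) ≤ K * ‖a‖) (by positivity : (0:ℝ) ≤ ‖b‖ / K) hsr
  have h4 : (K * ‖a‖) ^ s = K ^ s * ‖a‖ ^ s :=
    Real.mul_rpow hK.le (norm_nonneg _)
  have h5 : (‖b‖ / K) ^ r = (K ^ r)⁻¹ * ‖b‖ ^ r := by
    rw [div_eq_mul_inv, Real.mul_rpow (norm_nonneg _) (by positivity),
      Real.inv_rpow hK.le]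
    ring
  rw [h4, h5] at h3
  rw [h2] at h1
  exact h1.trans h3

theorem lp_norm_rpow_formula {Ω : Type*} [MeasurableSpace Ω] {μ : Measure Ω}
    {F : Type*} [NormedAddCommGroup F] {r : ℝ} (hr0 : 0 < r)
    (u : Lp F (ENNReal.ofReal r) μ) :
    ∫ x, ‖u x‖ ^ r ∂μ = ‖u‖ ^ r := by
  have hp0 : ENNReal.ofReal r ≠ 0 := by simp [ENNReal.ofReal_eq_zero]; linarith
  have hptop : ENNReal.ofReal r ≠ ⊤ := ENNReal.ofReal_ne_top
  have htoReal : (ENNReal.ofReal r).toReal = r := ENNReal.toReal_ofReal hr0.le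
  have hI : (0:ℝ) ≤ ∫ x, ‖u x‖ ^ r ∂μ :=
    integral_nonneg fun x => Real.rpow_nonneg (norm_nonneg _) r
  have h1 := (Lp.memLp u).eLpNorm_eq_integral_rpow_norm hp0 hptop
  rw [htoReal] at h1
  rw [Lp.norm_def, h1, ENNReal.toReal_ofReal (by positivity)]
  rw [← Real.rpow_mul hI, inv_mul_cancel₀ hr0.ne', Real.rpow_one]


open Set

/-- Scalar uniform-convexity gain for `Ψ`. -/
theorem psi_gain {Ψ : ℝ → ℝ} {r c₀ C₀ : ℝ} (hr : 2 ≤ r)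
    (hΨcont : ContinuousOn Ψ (Ici 0))
    (hΨconv : ConvexOn ℝ (Ici 0) Ψ)
    (hΨmono : MonotoneOn Ψ (Ici 0))
    (hΨstrict : StrictMonoOn Ψ (Ioi 0))
    (hc₀ : 0 < c₀)
    (hlow : ∀ a : ℝ, 0 ≤ a → c₀ * a ^ (r / 2) - C₀ ≤ Ψ a)
    {η : ℝ} (hη : 0 < η) :
    ∃ θ > 0, ∀ δ t : ℝ, 0 ≤ δ → δ ≤ t →
      θ * (δ ^ (r / 2) - η ^ (r / 2)) ≤ Ψ t - Ψ (t - δ) := by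
  have hr2 : (1 : ℝ) ≤ r / 2 := by linarith
  have hr2pos : (0 : ℝ) < r / 2 := by linarith
  set C₂ : ℝ := C₀ + Ψ 0 with hC₂def
  have hΨ0 : -C₀ ≤ Ψ 0 := by
    have := hlow 0 le_rfl
    rwa [Real.zero_rpow (by positivity), mul_zero, zero_sub] at this
  have hC₂ : 0 ≤ C₂ := by simp only [hC₂def]; linarith
  -- monotone gain nonneg
  have gain_nonneg : ∀ δ t : ℝ, 0 ≤ δ → δ ≤ t → 0 ≤ Ψ t - Ψ (t - δ) := by
    intro δ t hδ hδt
    have h1 : (0:ℝ) ≤ t - δ := by linarith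
    have := hΨmono (mem_Ici.2 h1) (mem_Ici.2 (by linarith : (0:ℝ) ≤ t)) (by linarith)
    linarith
  -- convexity slope estimate
  have slope : ∀ δ t : ℝ, 0 ≤ δ → δ ≤ t → 0 < t →
      (δ / t) * (Ψ t - Ψ 0) ≤ Ψ t - Ψ (t - δ) := by
    intro δ t hδ hδt ht
    have ha : 0 ≤ δ / t := by positivity
    have hb : 0 ≤ 1 - δ / t := by
      have : δ / t ≤ 1 := (div_le_one ht).2 hδt
      linarith
    have hcomb := hΨconv.2 (mem_Ici.2 le_rfl) (mem_Ici.2 ht.le) ha hb (by ring)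
    have hpt : (δ / t) • (0:ℝ) + (1 - δ / t) • t = t - δ := by
      simp only [smul_eq_mul, mul_zero, zero_add, sub_mul, one_mul, div_mul_cancel₀ δ ht.ne']
    rw [hpt] at hcomb
    have hmono := hΨmono (mem_Ici.2 (le_refl 0))
    simp only [smul_eq_mul] at hcomb
    nlinarith [hcomb]
  have hΨtΨ0 : ∀ t : ℝ, 0 ≤ t → c₀ * t ^ (r / 2) - C₂ ≤ Ψ t - Ψ 0 := by
    intro t ht
    have := hlow t ht
    simp only [hC₂def]; linarith
  -- claim2 : global coercive gain
  have claim2 : ∀ δ t : ℝ, 0 ≤ δ → δ ≤ t →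
      c₀ * δ ^ (r / 2) - C₂ ≤ Ψ t - Ψ (t - δ) := by
    intro δ t hδ hδt
    have ht0 : 0 ≤ t := le_trans hδ hδt
    rcases eq_or_lt_of_le hδ with h0 | hδpos
    · rw [← h0, Real.zero_rpow (by positivity), mul_zero, zero_sub, sub_zero, sub_self]
      linarith
    have ht : 0 < t := lt_of_lt_of_le hδpos hδt
    have hslope := slope δ t hδ hδt ht
    have hbase := hΨtΨ0 t ht.le
    have hfrac1 : δ / t ≤ 1 := (div_le_one ht).2 hδt
    have hfrac0 : 0 < δ / t := by positivity
    rcases le_or_gt (c₀ * t ^ (r / 2) - C₂) 0 with hneg | hpos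
    · -- then also c₀ δ^{r/2} - C₂ ≤ 0 ≤ gain
      have hδt' : δ ^ (r/2) ≤ t ^ (r/2) := Real.rpow_le_rpow hδ hδt (by positivity)
      have : c₀ * δ ^ (r/2) - C₂ ≤ 0 := by nlinarith
      linarith [gain_nonneg δ t hδ hδt]
    · -- key power comparison : δ * t^{r/2} ≥ t * δ^{r/2}
      have hpow : t * δ ^ (r/2) ≤ δ * t ^ (r/2) := by
        have h1 : δ ^ (r/2 - 1) ≤ t ^ (r/2 - 1) :=
          Real.rpow_le_rpow hδ hδt (by linarith)
        have hδsplit : δ ^ (r/2) = δ * δ ^ (r/2 - 1) := by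
          nth_rewrite 1 [show r/2 = 1 + (r/2 - 1) by ring]
          rw [Real.rpow_add hδpos, Real.rpow_one]
        have htsplit : t ^ (r/2) = t * t ^ (r/2 - 1) := by
          nth_rewrite 1 [show r/2 = 1 + (r/2 - 1) by ring]
          rw [Real.rpow_add ht, Real.rpow_one]
        rw [hδsplit, htsplit]
        calc t * (δ * δ ^ (r/2-1)) = (t * δ) * δ ^ (r/2-1) := by ring
          _ ≤ (t * δ) * t ^ (r/2-1) := by
              apply mul_le_mul_of_nonneg_left h1 (by positivity)
          _ = δ * (t * t ^ (r/2-1)) := by ring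
      have hstep : c₀ * δ ^ (r/2) - C₂ ≤ (δ / t) * (c₀ * t ^ (r/2) - C₂) := by
        rw [div_mul_eq_mul_div, le_div_iff₀ ht]
        have hC₂' : (δ / t) * C₂ ≤ C₂ := by nlinarith
        nlinarith
      calc c₀ * δ ^ (r/2) - C₂ ≤ (δ / t) * (c₀ * t ^ (r/2) - C₂) := hstep
        _ ≤ (δ / t) * (Ψ t - Ψ 0) := by
            apply mul_le_mul_of_nonneg_left _ hfrac0.le
            exact hΨtΨ0 t ht.le
        _ ≤ Ψ t - Ψ (t - δ) := hslope
  -- compact mid-range minimum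
  set T : ℝ := max η (max 1 (2 * C₂ / c₀)) with hTdef
  have hηT : η ≤ T := le_max_left _ _
  have h1T : (1:ℝ) ≤ T := le_trans (le_max_left _ _) (le_max_right _ _)
  have hCT : 2 * C₂ / c₀ ≤ T := le_trans (le_max_right _ _) (le_max_right _ _)
  -- continuity of h on the interval
  have hΨc : Continuous fun a : ℝ => Ψ (max a 0) := by
    apply hΨcont.comp_continuous (continuous_id.max continuous_const)
    intro x; exact mem_Ici.2 (le_max_right _ _)
  have hcontIcc : ContinuousOn (fun t => Ψ t - Ψ (t - η)) (Icc η T) := by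
    have : ContinuousOn (fun t : ℝ => Ψ (max t 0) - Ψ (max (t - η) 0)) (Icc η T) :=
      ((hΨc.sub (hΨc.comp (continuous_id.sub continuous_const))).continuousOn)
    apply this.congr
    intro t ht
    rcases ht with ⟨ht1, _⟩
    simp only [max_eq_left (by linarith : (0:ℝ) ≤ t), max_eq_left (by linarith : (0:ℝ) ≤ t - η)]
  obtain ⟨t₀, ht₀mem, ht₀min⟩ :=
    isCompact_Icc.exists_isMinOn (nonempty_Icc.2 hηT) hcontIcc
  set κ₁ : ℝ := Ψ t₀ - Ψ (t₀ - η) with hκ₁def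
  have hκ₁pos : 0 < κ₁ := by
    rcases ht₀mem with ⟨hηt₀, _⟩
    have ht₀pos : 0 < t₀ := lt_of_lt_of_le hη hηt₀
    rcases lt_or_ge 0 (t₀ - η) with hpos | hle
    · have := hΨstrict (mem_Ioi.2 hpos) (mem_Ioi.2 ht₀pos) (by linarith)
      simp only [hκ₁def]; linarith
    · have ht₀η : t₀ - η ≤ 0 := hle
      have h0 : 0 ≤ t₀ - η := by linarith
      have heq : t₀ - η = 0 := le_antisymm ht₀η h0
      have h1 : Ψ 0 ≤ Ψ (t₀/2) :=
        hΨmono (mem_Ici.2 le_rfl) (mem_Ici.2 (by linarith)) (by linarith)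
      have h2 : Ψ (t₀/2) < Ψ t₀ :=
        hΨstrict (mem_Ioi.2 (by linarith)) (mem_Ioi.2 ht₀pos) (by linarith)
      simp only [hκ₁def, heq]; linarith
  set κ : ℝ := min κ₁ (c₀ * η / 2) with hκdef
  have hκpos : 0 < κ := lt_min hκ₁pos (by positivity)
  -- mid-range bound
  have claim3 : ∀ δ t : ℝ, η ≤ δ → δ ≤ t → κ ≤ Ψ t - Ψ (t - δ) := by
    intro δ t hηδ hδt
    have hδ0 : 0 < δ := lt_of_lt_of_le hη hηδ
    have ht0 : 0 < t := lt_of_lt_of_le hδ0 hδt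
    rcases le_or_gt t T with hcase | hcase
    · -- t in compact window
      have h1 : Ψ (t - δ) ≤ Ψ (t - η) := by
        apply hΨmono (mem_Ici.2 (by linarith)) (mem_Ici.2 (by linarith)) (by linarith)
      have h2 : κ₁ ≤ Ψ t - Ψ (t - η) := by
        have := ht₀min (⟨le_trans hηδ hδt, hcase⟩ : t ∈ Icc η T)
        simpa [hκ₁def] using this
      calc κ ≤ κ₁ := min_le_left _ _
        _ ≤ Ψ t - Ψ (t - η) := h2
        _ ≤ Ψ t - Ψ (t - δ) := by linarith
    · -- large t
      have hT1 : 1 ≤ t := le_trans h1T hcase.le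
      have htr : t ≤ t ^ (r/2) := by
        nth_rewrite 1 [← Real.rpow_one t]
        exact Real.rpow_le_rpow_of_exponent_le hT1 hr2
      have hC₂t : C₂ ≤ c₀ / 2 * t := by
        have h1 : 2 * C₂ / c₀ ≤ t := le_trans hCT hcase.le
        rw [div_le_iff₀ hc₀] at h1
        nlinarith
      have hlow2 : c₀ / 2 * t ≤ Ψ t - Ψ 0 := by
        have := hΨtΨ0 t ht0.le
        nlinarith
      have hslope := slope δ t hδ0.le hδt ht0
      have hκ2 : κ ≤ c₀ * η / 2 := min_le_right _ _
      have hfinal : c₀ * η / 2 ≤ (δ / t) * (Ψ t - Ψ 0) := by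
        have hfrac : η / t ≤ δ / t := by gcongr
        calc c₀ * η / 2 = (η / t) * (c₀ / 2 * t) := by field_simp
          _ ≤ (δ / t) * (Ψ t - Ψ 0) :=
              mul_le_mul hfrac hlow2 (by positivity) (by positivity)
      linarith
  -- combine into power bound
  set B : ℝ := 2 * C₂ / c₀ + 1 with hBdef
  have hB : 0 < B := by positivity
  set θ : ℝ := min (c₀ / 2) (κ / B) with hθdef
  have hθpos : 0 < θ := lt_min (by positivity) (by positivity)
  refine ⟨θ, hθpos, ?_⟩
  intro δ t hδ hδt
  rcases lt_or_ge δ η with hsmall | hbig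
  · -- small separation : RHS nonpositive
    have h1 : δ ^ (r/2) ≤ η ^ (r/2) := Real.rpow_le_rpow hδ hsmall.le (by positivity)
    have h2 : θ * (δ ^ (r/2) - η ^ (r/2)) ≤ 0 := by nlinarith
    linarith [gain_nonneg δ t hδ hδt]
  · have hgain : θ * δ ^ (r/2) ≤ Ψ t - Ψ (t - δ) := by
      rcases le_or_gt B (δ ^ (r/2)) with hbigpow | hsmallpow
      · -- coercive regime
        have h1 := claim2 δ t hδ hδt
        have h2 : C₂ ≤ c₀ / 2 * δ ^ (r/2) := by
          have : 2 * C₂ / c₀ ≤ δ ^ (r/2) - 1 := by simp only [hBdef] at hbigpow; linarith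
          rw [div_le_iff₀ hc₀] at this
          nlinarith [Real.rpow_nonneg hδ (r/2)]
        have hθ1 : θ ≤ c₀ / 2 := min_le_left _ _
        nlinarith [Real.rpow_nonneg hδ (r/2)]
      · -- mid regime
        have h1 := claim3 δ t hbig hδt
        have hθ2 : θ ≤ κ / B := min_le_right _ _
        have : θ * δ ^ (r/2) ≤ (κ / B) * B := by
          apply mul_le_mul hθ2 hsmallpow.le (Real.rpow_nonneg hδ _) (by positivity)
        rw [div_mul_cancel₀ _ hB.ne'] at this
        linarith
    have : θ * (δ ^ (r/2) - η ^ (r/2)) ≤ θ * δ ^ (r/2) := by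
      nlinarith [Real.rpow_nonneg hη.le (r/2)]
    linarith

/-- convex-case existence and uniqueness (Theorem 4.6 of the
paper): the energy E(v) = ∫ Ψ(‖v + û‖²) dμ − ∫ f₀·(v + û) dμ admits a unique
global minimizer on a closed linear subspace V of Lʳ(μ; ℝᵈ). -/
theorem stmt_10 {Ω : Type*} [MeasurableSpace Ω] (μ : Measure Ω) [IsFiniteMeasure μ]
    (hμ : μ univ ≠ 0)
    (d : ℕ) (hd : 1 ≤ d) (r s : ℝ) (hr : 2 ≤ r) (hs : s = r / (r - 1))
    [Fact (1 ≤ ENNReal.ofReal r)]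
    (Ψ : ℝ → ℝ)
    (hΨcont : ContinuousOn Ψ (Ici 0))
    (hΨconv : ConvexOn ℝ (Ici 0) Ψ)
    (hΨmono : MonotoneOn Ψ (Ici 0))
    (hΨstrict : StrictMonoOn Ψ (Ioi 0))
    (c₀ C₀ C₁ : ℝ) (hc₀ : 0 < c₀) (hC₀ : 0 < C₀) (hC₁ : 0 < C₁)
    (hlow : ∀ a : ℝ, 0 ≤ a → c₀ * a ^ (r / 2) - C₀ ≤ Ψ a)
    (hup : ∀ a : ℝ, 0 ≤ a → Ψ a ≤ C₁ * (1 + a ^ (r / 2)))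
    (uh : Ω → EuclideanSpace ℝ (Fin d)) (huh : MemLp uh (ENNReal.ofReal r) μ)
    (f₀ : Ω → EuclideanSpace ℝ (Fin d)) (hf₀ : MemLp f₀ (ENNReal.ofReal s) μ)
    (V : Submodule ℝ (Lp (EuclideanSpace ℝ (Fin d)) (ENNReal.ofReal r) μ))
    (hV : IsClosed (V : Set (Lp (EuclideanSpace ℝ (Fin d)) (ENNReal.ofReal r) μ))) :
    ∃! v : Lp (EuclideanSpace ℝ (Fin d)) (ENNReal.ofReal r) μ,
      v ∈ V ∧ ∀ w ∈ V,
        (∫ x, Ψ (‖v x + uh x‖ ^ 2) ∂μ) - (∫ x, ⟪f₀ x, v x + uh x⟫ ∂μ) ≤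
        (∫ x, Ψ (‖w x + uh x‖ ^ 2) ∂μ) - (∫ x, ⟪f₀ x, w x + uh x⟫ ∂μ) := by
  classical
  have hr0 : (0:ℝ) < r := by linarith
  have hr1 : (1:ℝ) < r := by linarith
  have hp0 : ENNReal.ofReal r ≠ 0 := by simp [ENNReal.ofReal_eq_zero]; linarith
  have hptop : ENNReal.ofReal r ≠ ⊤ := ENNReal.ofReal_ne_top
  have htoReal : (ENNReal.ofReal r).toReal = r := ENNReal.toReal_ofReal hr0.le
  have hsr : Real.HolderConjugate s r := by
    rw [hs]; exact (Real.HolderConjugate.conjExponent hr1).symm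
  have hs0 : (0:ℝ) < s := hsr.pos
  set X := Lp (EuclideanSpace ℝ (Fin d)) (ENNReal.ofReal r) μ with hXdef
  set J : X → ℝ := fun v =>
    (∫ x, Ψ (‖v x + uh x‖ ^ 2) ∂μ) - (∫ x, ⟪f₀ x, v x + uh x⟫ ∂μ) with hJdef
  show ∃! v : X, v ∈ V ∧ ∀ w ∈ V, J v ≤ J w
  -- basic measure quantities
  set μΩ : ℝ := (μ univ).toReal with hμΩdef
  have hμΩ : 0 ≤ μΩ := ENNReal.toReal_nonneg
  -- MemLp of shifted functions
  have hFmem : ∀ v : X, MemLp (fun x => v x + uh x) (ENNReal.ofReal r) μ :=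
    fun v => (Lp.memLp v).add huh
  -- integrability of the Ψ-part
  have iΨ : ∀ v : X, Integrable (fun x => Ψ (‖v x + uh x‖ ^ 2)) μ :=
    fun v => integrable_psi_comp hr hΨcont hlow hup hc₀ hC₀ hC₁ (hFmem v)
  -- integrability of the inner part
  have iIn : ∀ v : X, Integrable (fun x => (⟪f₀ x, v x + uh x⟫ : ℝ)) μ :=
    fun v => integrable_inner_pair hsr hf₀ (hFmem v)
  -- integrability of norm powers
  have iNr : ∀ v : X, Integrable (fun x => ‖v x‖ ^ r) μ := by
    intro v
    have := (Lp.memLp v).integrable_norm_rpow hp0 hptop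
    rwa [htoReal] at this
  have iFr : ∀ v : X, Integrable (fun x => ‖v x + uh x‖ ^ r) μ := by
    intro v
    have := (hFmem v).integrable_norm_rpow hp0 hptop
    rwa [htoReal] at this
  have iSf : Integrable (fun x => ‖f₀ x‖ ^ s) μ := by
    have := hf₀.integrable_norm_rpow (by simp [ENNReal.ofReal_eq_zero]; linarith)
      ENNReal.ofReal_ne_top
    rwa [ENNReal.toReal_ofReal hs0.le] at this
  -- uniform convexity gain for J
  have ucgain : ∀ η : ℝ, 0 < η → ∃ θ > 0, ∀ v w : X,
      J ((2⁻¹:ℝ) • (v + w)) ≤ (J v + J w)/2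
        - θ * ((‖v - w‖ ^ r)/2^r - η^(r/2) * μΩ) := by
    intro η hη
    obtain ⟨θ, hθpos, hθ⟩ := psi_gain hr hΨcont hΨconv hΨmono hΨstrict hc₀ hlow hη
    refine ⟨θ, hθpos, ?_⟩
    intro v w
    set m : X := (2⁻¹:ℝ) • (v + w) with hmdef
    have hae : ∀ᵐ x ∂μ, m x = (2⁻¹:ℝ) • (v x + w x) := by
      filter_upwards [Lp.coeFn_smul (2⁻¹:ℝ) (v + w), Lp.coeFn_add v w] with x h1 h2
      rw [show m x = ((2⁻¹:ℝ) • (v + w) : X) x from rfl, h1, Pi.smul_apply, h2, Pi.add_apply]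
    have hsub : ∀ᵐ x ∂μ, (v - w : X) x = v x - w x := Lp.coeFn_sub v w
    have hpt : ∀ᵐ x ∂μ,
        Ψ (‖m x + uh x‖ ^ 2) ≤
          (Ψ (‖v x + uh x‖ ^ 2) + Ψ (‖w x + uh x‖ ^ 2))/2
            - θ * ((‖(v - w : X) x‖ ^ r)/2^r - η^(r/2)) := by
      filter_upwards [hae, hsub] with x h1 h2
      have hmx : m x + uh x = (2⁻¹:ℝ) • ((v x + uh x) + (w x + uh x)) := by
        rw [h1]; module
      have hdx : (v x + uh x) - (w x + uh x) = (v - w : X) x := by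
        rw [h2]; abel
      have hδt := delta_le_t (v x + uh x) (w x + uh x)
      have hδ0 : (0:ℝ) ≤ ‖(2⁻¹:ℝ) • ((v x + uh x) - (w x + uh x))‖^2 := sq_nonneg _
      have hg := vec_gain hΨconv (v x + uh x) (w x + uh x)
      have hθx := hθ _ _ hδ0 hδt
      have hδpow : (‖(2⁻¹:ℝ) • ((v x + uh x) - (w x + uh x))‖^2) ^ (r/2)
          = (‖(v - w : X) x‖ ^ r)/2^r := by
        rw [sq_rpow_helper hr0 _ (norm_nonneg _), norm_smul, Real.norm_eq_abs,
          abs_of_nonneg (by norm_num : (0:ℝ) ≤ 2⁻¹),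
          Real.mul_rpow (by norm_num) (norm_nonneg _),
          Real.inv_rpow (by norm_num), hdx]
        ring
      rw [hδpow] at hθx
      rw [hmx]
      linarith
    have i4 : Integrable (fun x => (‖(v - w : X) x‖ ^ r)/2^r) μ :=
      (iNr (v - w)).div_const (2^r)
    have i3 : Integrable (fun x => (‖(v - w : X) x‖ ^ r)/2^r - η^(r/2)) μ :=
      i4.sub (integrable_const _)
    have i2 : Integrable (fun x => θ * ((‖(v - w : X) x‖ ^ r)/2^r - η^(r/2))) μ :=
      i3.const_mul θ
    have i1 : Integrable
        (fun x => (Ψ (‖v x + uh x‖ ^ 2) + Ψ (‖w x + uh x‖ ^ 2))/2) μ :=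
      ((iΨ v).add (iΨ w)).div_const 2
    have hirhs : Integrable (fun x =>
        (Ψ (‖v x + uh x‖ ^ 2) + Ψ (‖w x + uh x‖ ^ 2))/2
          - θ * ((‖(v - w : X) x‖ ^ r)/2^r - η^(r/2))) μ := i1.sub i2
    have hInt1 := integral_mono_ae (iΨ m) hirhs hpt
    rw [integral_sub i1 i2,
      integral_div, integral_add (iΨ v) (iΨ w), integral_const_mul,
      integral_sub i4 (integrable_const _),
      integral_div, integral_const, smul_eq_mul, lp_norm_rpow_formula hr0 (v - w)]
      at hInt1
    have hLmid : ∫ x, (⟪f₀ x, m x + uh x⟫ : ℝ) ∂μ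
        = ((∫ x, (⟪f₀ x, v x + uh x⟫ : ℝ) ∂μ)
            + ∫ x, (⟪f₀ x, w x + uh x⟫ : ℝ) ∂μ)/2 := by
      have hpt2 : (fun x => (⟪f₀ x, m x + uh x⟫:ℝ)) =ᵐ[μ]
          fun x => ((⟪f₀ x, v x + uh x⟫:ℝ) + (⟪f₀ x, w x + uh x⟫:ℝ))/2 := by
        filter_upwards [hae] with x h1
        have hmx : m x + uh x = (2⁻¹:ℝ) • ((v x + uh x) + (w x + uh x)) := by
          rw [h1]; module
        rw [hmx, real_inner_smul_right, inner_add_right]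
        ring
      rw [integral_congr_ae hpt2, integral_div, integral_add (iIn v) (iIn w)]
    simp only [hJdef]
    rw [hLmid]
    have hμc : μ.real univ = μΩ := rfl
    rw [hμc] at hInt1
    linarith

  have sep : ∀ ε : ℝ, 0 < ε → ∃ ρ > 0, ∀ v w : X, ε ≤ ‖v - w‖ →
      J ((2⁻¹:ℝ) • (v + w)) ≤ (J v + J w)/2 - ρ := by
    intro ε hε
    have hβ : (0:ℝ) < ε^r/(2^r*(2*(μΩ+1))) := by positivity
    set η : ℝ := (ε^r/(2^r*(2*(μΩ+1))))^(2/r) with hηdef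
    have hηpos : 0 < η := Real.rpow_pos_of_pos hβ _
    obtain ⟨θ, hθpos, hθ⟩ := ucgain η hηpos
    have hηpow : η^(r/2) = ε^r/(2^r*(2*(μΩ+1))) := by
      rw [hηdef, ← Real.rpow_mul hβ.le, show (2/r)*(r/2) = (1:ℝ) by field_simp,
        Real.rpow_one]
    refine ⟨θ * ((ε^r/2^r)/2), by positivity, ?_⟩
    intro v w hvw
    have h1 := hθ v w
    have h2 : ε^r ≤ ‖v - w‖^r := Real.rpow_le_rpow hε.le hvw hr0.le
    have h3 : η^(r/2)*μΩ ≤ (ε^r/2^r)/2 := by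
      rw [hηpow, ← div_div,
        div_mul_eq_mul_div, div_le_div_iff₀ (by positivity) (by norm_num)]
      have ha : (0:ℝ) ≤ ε^r/2^r := by positivity
      nlinarith
    have h5 : ε^r/2^r ≤ ‖v - w‖^r/2^r := by gcongr
    have h4 : (ε^r/2^r)/2 ≤ ‖v - w‖^r/2^r - η^(r/2)*μΩ := by linarith
    have h6 : θ * ((ε^r/2^r)/2) ≤ θ * (‖v - w‖^r/2^r - η^(r/2)*μΩ) :=
      mul_le_mul_of_nonneg_left h4 hθpos.le
    linarith
  obtain ⟨Cl, hCl⟩ : ∃ Cl : ℝ, ∀ v : X, Cl ≤ J v := by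
    set K : ℝ := ((c₀*r)⁻¹)^(r⁻¹) with hKdef
    have hK : 0 < K := Real.rpow_pos_of_pos (by positivity) _
    have hKr : K^r = (c₀*r)⁻¹ := by
      rw [hKdef, ← Real.rpow_mul (by positivity), inv_mul_cancel₀ hr0.ne',
        Real.rpow_one]
    refine ⟨-(C₀*μΩ) - K^s/s * (∫ x, ‖f₀ x‖^s ∂μ), ?_⟩
    intro v
    have hA : c₀ * (∫ x, ‖v x + uh x‖^r ∂μ) - C₀*μΩ
        ≤ ∫ x, Ψ (‖v x + uh x‖^2) ∂μ := by
      have hpt : ∀ᵐ x ∂μ, c₀ * ‖v x + uh x‖^r - C₀ ≤ Ψ (‖v x + uh x‖^2) := by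
        filter_upwards with x
        have := hlow (‖v x + uh x‖^2) (sq_nonneg _)
        rwa [sq_rpow_helper hr0 _ (norm_nonneg _)] at this
      have iA1 : Integrable (fun x => c₀ * ‖v x + uh x‖^r - C₀) μ :=
        ((iFr v).const_mul c₀).sub (integrable_const C₀)
      have h0 := integral_mono_ae iA1 (iΨ v) hpt
      rw [integral_sub ((iFr v).const_mul c₀) (integrable_const C₀),
        integral_const_mul, integral_const, smul_eq_mul] at h0
      have hμc : μ.real univ = μΩ := rfl
      rw [hμc] at h0
      linarith
    have hB : ∫ x, (⟪f₀ x, v x + uh x⟫:ℝ) ∂μ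
        ≤ K^s/s * (∫ x, ‖f₀ x‖^s ∂μ) + c₀ * (∫ x, ‖v x + uh x‖^r ∂μ) := by
      have hpt : ∀ᵐ x ∂μ, (⟪f₀ x, v x + uh x⟫:ℝ)
          ≤ K^s * ‖f₀ x‖^s/s + c₀ * ‖v x + uh x‖^r := by
        filter_upwards with x
        have h1 := inner_young_bound hsr hK (f₀ x) (v x + uh x)
        have h2 : (K^r)⁻¹ * ‖v x + uh x‖^r / r = c₀ * ‖v x + uh x‖^r := by
          rw [hKr]
          field_simp
        rw [h2] at h1
        linarith
      have iB1 : Integrable (fun x => K^s * ‖f₀ x‖^s/s) μ :=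
        (iSf.const_mul (K^s)).div_const s
      have iB2 : Integrable (fun x => K^s * ‖f₀ x‖^s/s + c₀ * ‖v x + uh x‖^r) μ :=
        iB1.add ((iFr v).const_mul c₀)
      have h0 := integral_mono_ae (iIn v) iB2 hpt
      rw [integral_add iB1 ((iFr v).const_mul c₀),
        integral_div, integral_const_mul, integral_const_mul] at h0
      have he : (K^s * ∫ x, ‖f₀ x‖^s ∂μ)/s = K^s/s * ∫ x, ‖f₀ x‖^s ∂μ := by ring
      rw [he] at h0
      linarith
    simp only [hJdef]
    linarith
  have Jconv : ConvexOn ℝ (univ : Set X) J := by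
    refine ⟨convex_univ, ?_⟩
    intro v _ w _ a b ha hb hab
    have hcomb : ∀ᵐ x ∂μ, (a • v + b • w : X) x + uh x
        = a • (v x + uh x) + b • (w x + uh x) := by
      filter_upwards [Lp.coeFn_add (a • v) (b • w), Lp.coeFn_smul a v,
        Lp.coeFn_smul b w] with x h1 h2 h3
      rw [show ((a • v + b • w : X)) x = (⇑(a • v + b • w) : Ω → EuclideanSpace ℝ (Fin d)) x from rfl,
        h1, Pi.add_apply, h2, h3, Pi.smul_apply, Pi.smul_apply]
      have hkey : a • (v x + uh x) + b • (w x + uh x)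
          = a • v x + b • w x + (a+b) • uh x := by
        rw [smul_add, smul_add, add_smul]
        abel
      rw [hkey, hab, one_smul]
    have hΨpt : ∀ᵐ x ∂μ, Ψ (‖(a • v + b • w : X) x + uh x‖^2)
        ≤ a * Ψ (‖v x + uh x‖^2) + b * Ψ (‖w x + uh x‖^2) := by
      filter_upwards [hcomb] with x h1
      have hnorm : ‖a • (v x + uh x) + b • (w x + uh x)‖^2
          ≤ a*‖v x + uh x‖^2 + b*‖w x + uh x‖^2 := by
        have h2 : ‖a • (v x + uh x) + b • (w x + uh x)‖
            ≤ a*‖v x + uh x‖ + b*‖w x + uh x‖ := by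
          calc ‖a • (v x + uh x) + b • (w x + uh x)‖
              ≤ ‖a • (v x + uh x)‖ + ‖b • (w x + uh x)‖ := norm_add_le _ _
            _ = a*‖v x + uh x‖ + b*‖w x + uh x‖ := by
                rw [norm_smul, norm_smul, Real.norm_eq_abs, Real.norm_eq_abs,
                  abs_of_nonneg ha, abs_of_nonneg hb]
        nlinarith [sq_nonneg (‖v x + uh x‖ - ‖w x + uh x‖), mul_nonneg ha hb,
          norm_nonneg (a • (v x + uh x) + b • (w x + uh x)),
          norm_nonneg (v x + uh x), norm_nonneg (w x + uh x)]
      have hmem : a*‖v x + uh x‖^2 + b*‖w x + uh x‖^2 ∈ Ici (0:ℝ) :=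
        mem_Ici.2 (add_nonneg (mul_nonneg ha (sq_nonneg _))
          (mul_nonneg hb (sq_nonneg _)))
      have hm1 : Ψ (‖a • (v x + uh x) + b • (w x + uh x)‖^2)
          ≤ Ψ (a*‖v x + uh x‖^2 + b*‖w x + uh x‖^2) :=
        hΨmono (mem_Ici.2 (sq_nonneg _)) hmem hnorm
      have hm2 := hΨconv.2 (mem_Ici.2 (sq_nonneg ‖v x + uh x‖))
        (mem_Ici.2 (sq_nonneg ‖w x + uh x‖)) ha hb hab
      simp only [smul_eq_mul] at hm2
      rw [h1]
      linarith
    have iC : Integrable (fun x => a * Ψ (‖v x + uh x‖^2)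
        + b * Ψ (‖w x + uh x‖^2)) μ :=
      ((iΨ v).const_mul a).add ((iΨ w).const_mul b)
    have h1 := integral_mono_ae (iΨ (a • v + b • w)) iC hΨpt
    rw [integral_add ((iΨ v).const_mul a) ((iΨ w).const_mul b),
      integral_const_mul, integral_const_mul] at h1
    have h2 : ∫ x, (⟪f₀ x, (a • v + b • w : X) x + uh x⟫:ℝ) ∂μ
        = a * (∫ x, (⟪f₀ x, v x + uh x⟫:ℝ) ∂μ)
          + b * (∫ x, (⟪f₀ x, w x + uh x⟫:ℝ) ∂μ) := by
      rw [← integral_const_mul, ← integral_const_mul,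
        ← integral_add ((iIn v).const_mul a) ((iIn w).const_mul b)]
      apply integral_congr_ae
      filter_upwards [hcomb] with x h1x
      rw [h1x, inner_add_right, real_inner_smul_right, real_inner_smul_right]
    simp only [hJdef, smul_eq_mul]
    linarith
  have Jcont : Continuous J := by
    obtain ⟨Cu, hCu⟩ : ∃ Cu : ℝ, ∀ v : X, ‖v‖ < 1 → J v ≤ Cu := by
      set Nu : X := huh.toLp uh with hNudef
      refine ⟨C₁*μΩ + 1/s * (∫ x, ‖f₀ x‖^s ∂μ) + (C₁ + 1/r) * (1 + ‖Nu‖)^r, ?_⟩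
      intro v hv
      have hIvnn : (0:ℝ) ≤ ∫ x, ‖v x + uh x‖^r ∂μ :=
        integral_nonneg fun x => Real.rpow_nonneg (norm_nonneg _) r
      have hIv : ∫ x, ‖v x + uh x‖^r ∂μ ≤ (1 + ‖Nu‖)^r := by
        have hfe : (fun x => v x + uh x) =ᵐ[μ] ⇑(v + Nu) := by
          filter_upwards [Lp.coeFn_add v Nu, huh.coeFn_toLp] with x h1 h2
          rw [h1, Pi.add_apply, h2]
        have heq : ∫ x, ‖v x + uh x‖^r ∂μ = ∫ x, ‖(v + Nu) x‖^r ∂μ := by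
          apply integral_congr_ae
          filter_upwards [hfe] with x h
          rw [h]
        rw [heq, lp_norm_rpow_formula hr0 (v + Nu)]
        apply Real.rpow_le_rpow (norm_nonneg _) _ hr0.le
        calc ‖v + Nu‖ ≤ ‖v‖ + ‖Nu‖ := norm_add_le _ _
          _ ≤ 1 + ‖Nu‖ := by linarith
      have hup1 : ∫ x, Ψ (‖v x + uh x‖^2) ∂μ
          ≤ C₁*μΩ + C₁*(∫ x, ‖v x + uh x‖^r ∂μ) := by
        have hpt : ∀ᵐ x ∂μ, Ψ (‖v x + uh x‖^2) ≤ C₁ + C₁*‖v x + uh x‖^r := by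
          filter_upwards with x
          have := hup (‖v x + uh x‖^2) (sq_nonneg _)
          rw [sq_rpow_helper hr0 _ (norm_nonneg _)] at this
          linarith
        have iD2 : Integrable (fun x => C₁ + C₁*‖v x + uh x‖^r) μ :=
          (integrable_const C₁).add ((iFr v).const_mul C₁)
        have h0 := integral_mono_ae (iΨ v) iD2 hpt
        rw [integral_add (integrable_const C₁) ((iFr v).const_mul C₁),
          integral_const, integral_const_mul, smul_eq_mul] at h0
        have hμc : μ.real univ = μΩ := rfl
        rw [hμc] at h0
        linarith
      have hlow1 : -(1/s * (∫ x, ‖f₀ x‖^s ∂μ)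
            + 1/r * (∫ x, ‖v x + uh x‖^r ∂μ))
          ≤ ∫ x, (⟪f₀ x, v x + uh x⟫:ℝ) ∂μ := by
        have hpt : ∀ᵐ x ∂μ, -(‖f₀ x‖^s/s + ‖v x + uh x‖^r/r)
            ≤ (⟪f₀ x, v x + uh x⟫:ℝ) := by
          filter_upwards with x
          have h1 : |(⟪f₀ x, v x + uh x⟫:ℝ)| ≤ ‖f₀ x‖ * ‖v x + uh x‖ :=
            abs_real_inner_le_norm _ _
          have h2 := Real.young_inequality_of_nonneg (norm_nonneg (f₀ x))
            (norm_nonneg (v x + uh x)) hsr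
          have h3 := neg_abs_le (⟪f₀ x, v x + uh x⟫:ℝ)
          linarith
        have iY : Integrable (fun x => ‖f₀ x‖^s/s + ‖v x + uh x‖^r/r) μ :=
          (iSf.div_const s).add ((iFr v).div_const r)
        have iYn : Integrable (fun x => -(‖f₀ x‖^s/s + ‖v x + uh x‖^r/r)) μ := iY.neg
        have h0 := integral_mono_ae iYn (iIn v) hpt
        rw [integral_neg, integral_add (iSf.div_const s) ((iFr v).div_const r),
          integral_div, integral_div] at h0
        have e1 : (∫ x, ‖f₀ x‖^s ∂μ)/s = 1/s * (∫ x, ‖f₀ x‖^s ∂μ) := by ring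
        have e2 : (∫ x, ‖v x + uh x‖^r ∂μ)/r
            = 1/r * (∫ x, ‖v x + uh x‖^r ∂μ) := by ring
        rw [e1, e2] at h0
        linarith
      have hmul : (C₁ + 1/r) * (∫ x, ‖v x + uh x‖^r ∂μ)
          ≤ (C₁ + 1/r) * (1 + ‖Nu‖)^r :=
        mul_le_mul_of_nonneg_left hIv (by positivity)
      simp only [hJdef]
      linarith
    have hbdd : Filter.IsBoundedUnder (· ≤ ·) (nhds (0:X)) J := by
      apply Filter.isBoundedUnder_of_eventually_le (a := Cu)
      filter_upwards [Metric.ball_mem_nhds (0:X) one_pos] with v hv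
      exact hCu v (by simpa [Metric.mem_ball, dist_zero_right] using hv)
    have h34 := (Jconv.continuousOn_tfae isOpen_univ ⟨0, mem_univ 0⟩).out 3 1
    have hcont : ContinuousOn J (univ : Set X) :=
      h34.mp ⟨0, mem_univ 0, hbdd⟩
    exact continuousOn_univ.1 hcont
  -- minimization
  set S : Set ℝ := J '' (V : Set X) with hSdef
  have hSne : S.Nonempty := ⟨J 0, ⟨0, V.zero_mem, rfl⟩⟩
  have hSbdd : BddBelow S := by
    refine ⟨Cl, ?_⟩
    rintro y ⟨v, -, rfl⟩
    exact hCl v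
  set c : ℝ := sInf S with hcdef
  have hc_le : ∀ v : X, v ∈ V → c ≤ J v := fun v hv => csInf_le hSbdd ⟨v, hv, rfl⟩
  have hseq : ∀ n : ℕ, ∃ v : X, v ∈ V ∧ J v < c + 1/(n+1) := by
    intro n
    have hlt : c < c + 1/((n:ℝ)+1) := by
      have : (0:ℝ) < 1/((n:ℝ)+1) := by positivity
      linarith
    obtain ⟨y, ⟨v, hv, rfl⟩, hy⟩ := exists_lt_of_csInf_lt hSne hlt
    exact ⟨v, hv, hy⟩
  choose u huV huJ using hseq
  have hcauchy : CauchySeq u := by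
    rw [Metric.cauchySeq_iff]
    intro ε hε
    obtain ⟨ρ, hρ, hsep⟩ := sep ε hε
    obtain ⟨N, hN⟩ := exists_nat_gt (1/ρ)
    refine ⟨N, ?_⟩
    intro n hn k hk
    by_contra hcon
    push_neg at hcon
    have hd : ε ≤ ‖u n - u k‖ := by
      rw [dist_eq_norm] at hcon
      exact hcon
    have hmidV : (2⁻¹:ℝ) • (u n + u k) ∈ V :=
      V.smul_mem _ (V.add_mem (huV n) (huV k))
    have h1 := hsep (u n) (u k) hd
    have h2 := hc_le _ hmidV
    have hfr : ∀ {j : ℕ}, N ≤ j → (1:ℝ)/((j:ℝ)+1) ≤ 1/((N:ℝ)+1) := by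
      intro j hj
      apply one_div_le_one_div_of_le (by positivity)
      have : (N:ℝ) ≤ (j:ℝ) := by exact_mod_cast hj
      linarith
    have h3 : J (u n) < c + 1/((N:ℝ)+1) := lt_of_lt_of_le (huJ n) (by linarith [hfr hn])
    have h4 : J (u k) < c + 1/((N:ℝ)+1) := lt_of_lt_of_le (huJ k) (by linarith [hfr hk])
    have hρN : 1/((N:ℝ)+1) < ρ := by
      rw [div_lt_iff₀ (by positivity)]
      rw [div_lt_iff₀ hρ] at hN
      nlinarith
    linarith
  obtain ⟨v, hvlim⟩ := cauchySeq_tendsto_of_complete hcauchy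
  have hvV : v ∈ V := hV.mem_of_tendsto hvlim (Filter.Eventually.of_forall huV)
  have hJlim : Filter.Tendsto (fun n => J (u n)) Filter.atTop (nhds (J v)) :=
    (Jcont.tendsto v).comp hvlim
  have hJlim2 : Filter.Tendsto (fun n => J (u n)) Filter.atTop (nhds c) := by
    have hupper : Filter.Tendsto (fun n : ℕ => c + 1/((n:ℝ)+1))
        Filter.atTop (nhds c) := by
      have h := Filter.Tendsto.const_add c tendsto_one_div_add_atTop_nhds_zero_nat
      simpa using h
    exact tendsto_of_tendsto_of_tendsto_of_le_of_le tendsto_const_nhds hupper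
      (fun n => hc_le _ (huV n)) (fun n => (huJ n).le)
  have hJv : J v = c := tendsto_nhds_unique hJlim hJlim2
  refine ⟨v, ⟨hvV, fun w hw => ?_⟩, ?_⟩
  · rw [hJv]
    exact hc_le w hw
  · rintro v' ⟨hv'V, hv'min⟩
    by_contra hne
    have hvv' : 0 < ‖v' - v‖ := by
      rw [norm_pos_iff]
      intro h
      apply hne
      rw [sub_eq_zero] at h
      exact h
    have hJv' : J v' = c := by
      have h1 : J v' ≤ J v := hv'min v hvV
      have h2 := hc_le _ hv'V
      rw [hJv] at h1
      linarith
    obtain ⟨ρ, hρ, hsep2⟩ := sep (‖v' - v‖) hvv'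
    have hmidV : (2⁻¹:ℝ) • (v' + v) ∈ V :=
      V.smul_mem _ (V.add_mem hv'V hvV)
    have h1 := hsep2 v' v le_rfl
    have h2 := hc_le _ hmidV
    rw [hJv, hJv'] at h1
    linarith
end

section
/- Let (Ω, μ) be a finite measure space, d ≥ 1, and r ≥ 2. Suppose φ₂(a) ≤ C(1 + a^{(r−2)/2}) for all a ≥ 1 and some constant C > 0. Let w, φ ∈ Lʳ(μ; ℝᵈ) and assume φ(x) = 0 for μ-almost every x with ‖w(x)‖ ≥ 1. Then lim_{δ→0⁺} (1/δ)·∫_Ω (Ψ(‖w + δφ‖²) − Ψ(‖w‖²)) dμ = ∫_Ω φ₁(‖w‖²)·(w·φ) dμ, where the right-hand integrand vanishes wherever φ does. -/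
open Set MeasureTheory Filter intervalIntegral
open scoped RealInnerProductSpace

private lemma psi_incr_bound
    {φ₁ φ₂ : ℝ → ℝ}
    (hφ₁c : ContinuousOn φ₁ (Icc 0 1)) (hφ₂c : ContinuousOn φ₂ (Ici 1))
    (hφ₁m : MonotoneOn φ₁ (Icc 0 1)) (hφ₂m : MonotoneOn φ₂ (Ici 1))
    (hφ₁nn : ∀ a ∈ Icc (0:ℝ) 1, 0 ≤ φ₁ a) (hφ₂nn : ∀ a ∈ Ici (1:ℝ), 0 ≤ φ₂ a)
    {Ψ : ℝ → ℝ}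
    (hΨ : ∀ a : ℝ, 0 ≤ a →
      Ψ a = if a ≤ 1 then (1/2) * ∫ t in (1:ℝ)..a, φ₁ t
            else (1/2) * ∫ t in (1:ℝ)..a, φ₂ t)
    {s t : ℝ} (hs : 0 ≤ s) (hst : s ≤ t) :
    0 ≤ Ψ t - Ψ s ∧ Ψ t - Ψ s ≤ (1/2) * (φ₁ 1 + φ₂ (max t 1)) * (t - s) := by
  have ht0 : (0:ℝ) ≤ t := hs.trans hst
  have hφ₁1 : 0 ≤ φ₁ 1 := hφ₁nn 1 (by norm_num)
  have hφ₂max : 0 ≤ φ₂ (max t 1) := hφ₂nn _ (mem_Ici.mpr (le_max_right _ _))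
  by_cases ht : t ≤ 1
  · -- both branches use φ₁
    have hs1 : s ≤ 1 := hst.trans ht
    have hint : ∀ a b : ℝ, 0 ≤ a → a ≤ 1 → 0 ≤ b → b ≤ 1 →
        IntervalIntegrable φ₁ volume a b := fun a b ha ha' hb hb' =>
      (hφ₁c.mono (uIcc_subset_Icc ⟨ha, ha'⟩ ⟨hb, hb'⟩)).intervalIntegrable
    rw [hΨ t ht0, hΨ s hs, if_pos ht, if_pos hs1]
    have hsub : (∫ u in (1:ℝ)..t, φ₁ u) - ∫ u in (1:ℝ)..s, φ₁ u = ∫ u in s..t, φ₁ u := by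
      rw [intervalIntegral.integral_interval_sub_left (hint 1 t zero_le_one le_rfl ht0 ht)
        (hint 1 s zero_le_one le_rfl hs hs1)]
    have hnn : 0 ≤ ∫ u in s..t, φ₁ u :=
      intervalIntegral.integral_nonneg hst (fun u hu => hφ₁nn u ⟨hs.trans hu.1, hu.2.trans ht⟩)
    have hub : (∫ u in s..t, φ₁ u) ≤ φ₁ 1 * (t - s) := by
      calc (∫ u in s..t, φ₁ u) ≤ ∫ _u in s..t, φ₁ 1 :=
            intervalIntegral.integral_mono_on hst
              (hint s t hs hs1 ht0 ht) intervalIntegrable_const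
              (fun u hu => hφ₁m ⟨hs.trans hu.1, hu.2.trans ht⟩ (by norm_num) (hu.2.trans ht))
        _ = φ₁ 1 * (t - s) := by simp [mul_comm]
    constructor
    · nlinarith
    · nlinarith
  · push_neg at ht
    have hmax : max t 1 = t := max_eq_left ht.le
    rw [hmax]
    have hφ₂t : 0 ≤ φ₂ t := hφ₂nn t (le_of_lt ht)
    have hint2 : ∀ a b : ℝ, 1 ≤ a → 1 ≤ b → IntervalIntegrable φ₂ volume a b :=
      fun a b ha hb =>
        (hφ₂c.mono (fun x hx => (le_min ha hb).trans hx.1)).intervalIntegrable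
    by_cases hs1 : s ≤ 1
    · -- s ≤ 1 < t
      rw [hΨ t ht0, hΨ s hs, if_neg (not_le.mpr ht), if_pos hs1]
      have hint1 : IntervalIntegrable φ₁ volume s 1 :=
        (hφ₁c.mono (uIcc_subset_Icc ⟨hs, hs1⟩ (by norm_num))).intervalIntegrable
      have hsym : (∫ u in (1:ℝ)..s, φ₁ u) = - ∫ u in s..(1:ℝ), φ₁ u :=
        intervalIntegral.integral_symm s 1
      have h1nn : 0 ≤ ∫ u in s..(1:ℝ), φ₁ u :=
        intervalIntegral.integral_nonneg hs1 (fun u hu => hφ₁nn u ⟨hs.trans hu.1, hu.2⟩)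
      have h1ub : (∫ u in s..(1:ℝ), φ₁ u) ≤ φ₁ 1 * (1 - s) := by
        calc (∫ u in s..(1:ℝ), φ₁ u) ≤ ∫ _u in s..(1:ℝ), φ₁ 1 :=
              intervalIntegral.integral_mono_on hs1 hint1 intervalIntegrable_const
                (fun u hu => hφ₁m ⟨hs.trans hu.1, hu.2⟩ (by norm_num) hu.2)
          _ = φ₁ 1 * (1 - s) := by simp [mul_comm]
      have h2nn : 0 ≤ ∫ u in (1:ℝ)..t, φ₂ u :=
        intervalIntegral.integral_nonneg ht.le (fun u hu => hφ₂nn u hu.1)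
      have h2ub : (∫ u in (1:ℝ)..t, φ₂ u) ≤ φ₂ t * (t - 1) := by
        calc (∫ u in (1:ℝ)..t, φ₂ u) ≤ ∫ _u in (1:ℝ)..t, φ₂ t :=
              intervalIntegral.integral_mono_on ht.le (hint2 1 t le_rfl ht.le)
                intervalIntegrable_const
                (fun u hu => hφ₂m hu.1 (le_of_lt ht) hu.2)
          _ = φ₂ t * (t - 1) := by simp [mul_comm]
      rw [hsym]
      constructor
      · nlinarith
      · nlinarith
    · push_neg at hs1
      rw [hΨ t ht0, hΨ s hs, if_neg (not_le.mpr ht), if_neg (not_le.mpr hs1)]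
      have hsub : (∫ u in (1:ℝ)..t, φ₂ u) - ∫ u in (1:ℝ)..s, φ₂ u = ∫ u in s..t, φ₂ u := by
        rw [intervalIntegral.integral_interval_sub_left (hint2 1 t le_rfl (hs1.le.trans hst))
          (hint2 1 s le_rfl hs1.le)]
      have hnn : 0 ≤ ∫ u in s..t, φ₂ u :=
        intervalIntegral.integral_nonneg hst (fun u hu => hφ₂nn u (hs1.le.trans hu.1))
      have hub : (∫ u in s..t, φ₂ u) ≤ φ₂ t * (t - s) := by
        calc (∫ u in s..t, φ₂ u) ≤ ∫ _u in s..t, φ₂ t :=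
              intervalIntegral.integral_mono_on hst (hint2 s t hs1.le (hs1.le.trans hst))
                intervalIntegrable_const
                (fun u hu => hφ₂m (hs1.le.trans hu.1) (hs1.le.trans hst) hu.2)
          _ = φ₂ t * (t - s) := by simp [mul_comm]
      constructor
      · nlinarith
      · nlinarith

private lemma psi_slope_tendsto {E : Type*} [NormedAddCommGroup E] [InnerProductSpace ℝ E]
    {φ₁ : ℝ → ℝ} (hφ₁c : ContinuousOn φ₁ (Icc 0 1))
    {Ψ : ℝ → ℝ}
    (hΨ₁ : ∀ a : ℝ, 0 ≤ a → a ≤ 1 → Ψ a = (1/2) * ∫ t in (1:ℝ)..a, φ₁ t)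
    (v u : E) (hv : ‖v‖ < 1) :
    Tendsto (fun δ : ℝ => (1/δ) * (Ψ (‖v + δ • u‖ ^ 2) - Ψ (‖v‖ ^ 2)))
      (nhdsWithin 0 (Ioi 0)) (nhds (φ₁ (‖v‖ ^ 2) * ⟪v, u⟫)) := by
  set c : ℝ → ℝ := fun t => max 0 (min t 1) with hc_def
  have hc : Continuous c := continuous_const.max (continuous_id.min continuous_const)
  have hmaps : ∀ t, c t ∈ Icc (0:ℝ) 1 :=
    fun t => ⟨le_max_left _ _, max_le zero_le_one (min_le_right _ _)⟩
  have hcont : Continuous (fun t => φ₁ (c t)) := hφ₁c.comp_continuous hc hmaps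
  have hcfix : ∀ t : ℝ, 0 ≤ t → t ≤ 1 → c t = t := fun t h0 h1 => by
    simp [hc_def, min_eq_left h1, max_eq_right h0]
  set F : ℝ → ℝ := fun a => (1/2) * ∫ t in (1:ℝ)..a, φ₁ (c t) with hF_def
  have hΨF : ∀ a : ℝ, 0 ≤ a → a ≤ 1 → Ψ a = F a := by
    intro a h0 h1
    rw [hΨ₁ a h0 h1, hF_def]
    simp only
    congr 1
    refine intervalIntegral.integral_congr fun t ht => ?_
    have hsub : uIcc (1:ℝ) a ⊆ Icc 0 1 := uIcc_subset_Icc (by norm_num) ⟨h0, h1⟩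
    exact (congrArg φ₁ (hcfix t (hsub ht).1 (hsub ht).2)).symm
  have hF' : ∀ a : ℝ, HasDerivAt F ((1/2) * φ₁ (c a)) a := by
    intro a
    exact (intervalIntegral.integral_hasDerivAt_right
      (hcont.intervalIntegrable _ _)
      hcont.stronglyMeasurable.stronglyMeasurableAtFilter
      hcont.continuousAt).const_mul (1/2)
  have hkey : ∀ δ : ℝ, ‖v + δ • u‖ ^ 2 = ‖v‖ ^ 2 + 2 * ⟪v, u⟫ * δ + ‖u‖ ^ 2 * δ ^ 2 := by
    intro δ
    rw [norm_add_sq_real, real_inner_smul_right, norm_smul, Real.norm_eq_abs, mul_pow, sq_abs]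
    ring
  have hA : HasDerivAt (fun δ : ℝ => ‖v + δ • u‖ ^ 2) (2 * ⟪v, u⟫) 0 := by
    have h1 : HasDerivAt (fun δ : ℝ => ‖v‖ ^ 2 + 2 * ⟪v, u⟫ * δ + ‖u‖ ^ 2 * δ ^ 2)
        (2 * ⟪v, u⟫) 0 := by
      have := (((hasDerivAt_id (0:ℝ)).const_mul (2 * ⟪v, u⟫)).const_add (‖v‖ ^ 2)).add
        ((hasDerivAt_pow 2 (0:ℝ)).const_mul (‖u‖ ^ 2))
      refine this.congr_deriv ?_
      simp
    exact h1.congr_deriv rfl |>.congr_of_eventuallyEq (Eventually.of_forall fun δ => (hkey δ))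
  have hv2 : ‖v‖ ^ 2 ≤ 1 := by nlinarith [norm_nonneg v]
  have hv20 : (0:ℝ) ≤ ‖v‖ ^ 2 := sq_nonneg _
  have hcomp : HasDerivAt (fun δ : ℝ => F (‖v + δ • u‖ ^ 2)) (φ₁ (‖v‖ ^ 2) * ⟪v, u⟫) 0 := by
    have := (hF' (‖v + (0:ℝ) • u‖ ^ 2)).comp 0 hA
    simp only [zero_smul, add_zero] at this
    refine this.congr_deriv ?_
    rw [hcfix _ hv20 hv2]
    ring
  rw [hasDerivAt_iff_tendsto_slope] at hcomp
  have hmono : nhdsWithin (0:ℝ) (Ioi 0) ≤ nhdsWithin 0 {0}ᶜ :=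
    nhdsWithin_mono 0 (fun x hx => ne_of_gt hx)
  have hslope := hcomp.mono_left hmono
  have hev : ∀ᶠ δ in nhdsWithin (0:ℝ) (Ioi 0), ‖v + δ • u‖ < 1 := by
    have hcn : Continuous fun δ : ℝ => ‖v + δ • u‖ :=
      (continuous_const.add (continuous_id.smul continuous_const)).norm
    have : Tendsto (fun δ : ℝ => ‖v + δ • u‖) (nhds 0) (nhds ‖v‖) := by
      have h := hcn.continuousAt (x := 0)
      unfold ContinuousAt at h
      simpa using h
    exact ((this.eventually (eventually_lt_nhds hv)).filter_mono nhdsWithin_le_nhds)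
  refine hslope.congr' ?_
  filter_upwards [hev, self_mem_nhdsWithin] with δ h1 (h2 : δ ∈ Ioi 0)
  have hδ : δ ≠ 0 := ne_of_gt h2
  have ha1 : ‖v + δ • u‖ ^ 2 ≤ 1 := by nlinarith [norm_nonneg (v + δ • u)]
  rw [slope_def_field]
  rw [hΨF _ (sq_nonneg _) ha1, hΨF _ hv20 hv2]
  simp only [zero_smul, add_zero, sub_zero]
  ring

private lemma psi_abs_sub_bound
    {φ₁ φ₂ : ℝ → ℝ}
    (hφ₁c : ContinuousOn φ₁ (Icc 0 1)) (hφ₂c : ContinuousOn φ₂ (Ici 1))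
    (hφ₁m : MonotoneOn φ₁ (Icc 0 1)) (hφ₂m : MonotoneOn φ₂ (Ici 1))
    (hφ₁nn : ∀ a ∈ Icc (0:ℝ) 1, 0 ≤ φ₁ a) (hφ₂nn : ∀ a ∈ Ici (1:ℝ), 0 ≤ φ₂ a)
    {Ψ : ℝ → ℝ}
    (hΨ : ∀ a : ℝ, 0 ≤ a →
      Ψ a = if a ≤ 1 then (1/2) * ∫ t in (1:ℝ)..a, φ₁ t
            else (1/2) * ∫ t in (1:ℝ)..a, φ₂ t)
    {p q : ℝ} (hp : 0 ≤ p) (hq : 0 ≤ q) :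
    |Ψ p - Ψ q| ≤ (1/2) * (φ₁ 1 + φ₂ (max (max p q) 1)) * |p - q| := by
  rcases le_total q p with h | h
  · obtain ⟨h1, h2⟩ := psi_incr_bound hφ₁c hφ₂c hφ₁m hφ₂m hφ₁nn hφ₂nn hΨ hq h
    rw [abs_of_nonneg h1, abs_of_nonneg (by linarith), max_eq_left h]
    exact h2
  · obtain ⟨h1, h2⟩ := psi_incr_bound hφ₁c hφ₂c hφ₁m hφ₂m hφ₁nn hφ₂nn hΨ hp h
    rw [abs_sub_comm, abs_of_nonneg h1, abs_sub_comm, abs_of_nonneg (by linarith),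
      max_eq_right h]
    exact h2

set_option maxHeartbeats 1000000 in
/-- directional-derivative identity on the low-speed region
(from the proof of Lemma 4.5 of the paper): if φ vanishes a.e. where ‖w‖ ≥ 1,
then (1/δ)∫ (Ψ(‖w + δφ‖²) − Ψ(‖w‖²)) dμ → ∫ φ₁(‖w‖²) (w·φ) dμ as δ → 0⁺. -/
theorem stmt_14 {Ω : Type*} [MeasurableSpace Ω] (μ : Measure Ω) [IsFiniteMeasure μ]
    (d : ℕ) (hd : 1 ≤ d) (r : ℝ) (hr : 2 ≤ r) (C : ℝ) (hC : 0 < C)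
    (φ₁ φ₂ : ℝ → ℝ)
    (hφ₁c : ContinuousOn φ₁ (Icc 0 1)) (hφ₂c : ContinuousOn φ₂ (Ici 1))
    (hφ₁m : MonotoneOn φ₁ (Icc 0 1)) (hφ₂m : MonotoneOn φ₂ (Ici 1))
    (hφ₁nn : ∀ a ∈ Icc (0:ℝ) 1, 0 ≤ φ₁ a) (hφ₂nn : ∀ a ∈ Ici (1:ℝ), 0 ≤ φ₂ a)
    (hbound : ∀ a : ℝ, 1 ≤ a → φ₂ a ≤ C * (1 + a ^ ((r - 2) / 2)))
    (Ψ : ℝ → ℝ)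
    (hΨ : ∀ a : ℝ, 0 ≤ a →
      Ψ a = if a ≤ 1 then (1/2) * ∫ t in (1:ℝ)..a, φ₁ t
            else (1/2) * ∫ t in (1:ℝ)..a, φ₂ t)
    (w φ : Ω → EuclideanSpace ℝ (Fin d))
    (hw : MemLp w (ENNReal.ofReal r) μ) (hφ : MemLp φ (ENNReal.ofReal r) μ)
    (hsupp : ∀ᵐ x ∂μ, 1 ≤ ‖w x‖ → φ x = 0) :
    Tendsto (fun δ : ℝ =>
        (1 / δ) * ∫ x, (Ψ (‖w x + δ • φ x‖ ^ 2) - Ψ (‖w x‖ ^ 2)) ∂μ)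
      (nhdsWithin 0 (Ioi 0))
      (nhds (∫ x, φ₁ (‖w x‖ ^ 2) * ⟪w x, φ x⟫ ∂μ)) := by
  classical
  have hφ₁1 : 0 ≤ φ₁ 1 := hφ₁nn 1 (by norm_num)
  have hrp : (0:ℝ) < r := by linarith
  set g : Ω → ℝ := fun x => ‖w x‖ + ‖φ x‖ with hg_def
  have hg0 : ∀ x, 0 ≤ g x := fun x => add_nonneg (norm_nonneg _) (norm_nonneg _)
  set B : Ω → ℝ := fun x => (φ₁ 1 + 2*C) * g x ^ 2 + C * g x ^ r with hB_def
  -- integrability of the dominating function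
  have hgmem : MemLp g (ENNReal.ofReal r) μ := hw.norm.add hφ.norm
  have hint_r : Integrable (fun x => g x ^ r) μ := by
    have h := hgmem.integrable_norm_rpow (by simp [hrp]) (by simp)
    rw [ENNReal.toReal_ofReal hrp.le] at h
    refine h.congr (Eventually.of_forall fun x => ?_)
    simp only [Real.norm_eq_abs, abs_of_nonneg (hg0 x)]
  have hint_2 : Integrable (fun x => g x ^ 2) μ := by
    have h2 : MemLp g 2 μ := hgmem.mono_exponent (by
      rw [← ENNReal.ofReal_ofNat 2]
      exact ENNReal.ofReal_le_ofReal hr)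
    exact h2.integrable_sq
  have hB_int : Integrable B μ := (hint_2.const_mul _).add (hint_r.const_mul _)
  -- continuous version of Ψ on nonnegative arguments
  set c1 : ℝ → ℝ := fun t => max 0 (min t 1) with hc1_def
  set c2 : ℝ → ℝ := fun t => max 1 t with hc2_def
  have hcont1 : Continuous fun t => φ₁ (c1 t) :=
    hφ₁c.comp_continuous (continuous_const.max (continuous_id.min continuous_const))
      (fun t => ⟨le_max_left _ _, max_le zero_le_one (min_le_right _ _)⟩)
  have hcont2 : Continuous fun t => φ₂ (c2 t) :=
    hφ₂c.comp_continuous (continuous_const.max continuous_id)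
      (fun t => mem_Ici.mpr (le_max_left _ _))
  set P1 : ℝ → ℝ := fun a => (1/2) * ∫ t in (1:ℝ)..a, φ₁ (c1 t) with hP1_def
  set P2 : ℝ → ℝ := fun a => (1/2) * ∫ t in (1:ℝ)..a, φ₂ (c2 t) with hP2_def
  have hP1c : Continuous P1 := continuous_const.mul
    (intervalIntegral.continuous_primitive (fun a b => hcont1.intervalIntegrable a b) 1)
  have hP2c : Continuous P2 := continuous_const.mul
    (intervalIntegral.continuous_primitive (fun a b => hcont2.intervalIntegrable a b) 1)
  set Ψt : ℝ → ℝ := fun a => if a ≤ 1 then P1 a else P2 a with hΨt_def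
  have hΨtc : Continuous Ψt := by
    refine Continuous.if_le hP1c hP2c continuous_id continuous_const fun a ha => ?_
    subst ha
    simp [hP1_def, hP2_def]
  have hΨeq : ∀ a : ℝ, 0 ≤ a → Ψ a = Ψt a := by
    intro a h0
    rw [hΨ a h0, hΨt_def]
    simp only
    split_ifs with h1
    · rw [hP1_def]
      simp only
      congr 1
      refine intervalIntegral.integral_congr fun t ht => ?_
      have hsub : uIcc (1:ℝ) a ⊆ Icc 0 1 := uIcc_subset_Icc (by norm_num) ⟨h0, h1⟩
      have := hsub ht
      rw [hc1_def]
      simp only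
      rw [min_eq_left this.2, max_eq_right this.1]
    · push_neg at h1
      rw [hP2_def]
      simp only
      congr 1
      refine intervalIntegral.integral_congr fun t ht => ?_
      have hsub : uIcc (1:ℝ) a ⊆ Ici 1 := fun x hx => by
        rcases mem_uIcc.mp hx with h | h
        · exact h.1
        · exact h1.le.trans h.1
      rw [hc2_def]
      simp only
      rw [max_eq_right (hsub ht)]
  -- measurability
  have hmeas : ∀ δ : ℝ, AEStronglyMeasurable
      (fun x => (1/δ) * (Ψ (‖w x + δ • φ x‖ ^ 2) - Ψ (‖w x‖ ^ 2))) μ := by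
    intro δ
    have h1 : AEStronglyMeasurable (fun x => ‖w x + δ • φ x‖ ^ 2) μ :=
      (continuous_pow 2).comp_aestronglyMeasurable (hw.1.add (hφ.1.const_smul δ)).norm
    have h2 : AEStronglyMeasurable (fun x => ‖w x‖ ^ 2) μ :=
      (continuous_pow 2).comp_aestronglyMeasurable hw.1.norm
    have := ((hΨtc.comp_aestronglyMeasurable h1).sub
      (hΨtc.comp_aestronglyMeasurable h2)).const_mul (1/δ)
    refine this.congr (Eventually.of_forall fun x => ?_)
    simp only [Pi.sub_apply]
    rw [hΨeq (‖w x + δ • φ x‖ ^ 2) (sq_nonneg _), hΨeq (‖w x‖ ^ 2) (sq_nonneg _)]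
  -- the dominating bound
  have h_bound : ∀ᶠ δ in nhdsWithin (0:ℝ) (Ioi 0), ∀ᵐ x ∂μ,
      ‖(1/δ) * (Ψ (‖w x + δ • φ x‖ ^ 2) - Ψ (‖w x‖ ^ 2))‖ ≤ B x := by
    have hIoc : Ioc (0:ℝ) 1 ∈ nhdsWithin (0:ℝ) (Ioi 0) :=
      Ioc_mem_nhdsGT_of_mem ⟨le_rfl, one_pos⟩
    filter_upwards [hIoc] with δ hδ
    refine ae_of_all _ fun x => ?_
    set a1 : ℝ := ‖w x + δ • φ x‖ ^ 2 with ha1_def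
    set a0 : ℝ := ‖w x‖ ^ 2 with ha0_def
    have hδ0 : (0:ℝ) < δ := hδ.1
    have hδ1 : δ ≤ 1 := hδ.2
    have hgx : 0 ≤ g x := hg0 x
    -- a1, a0 ≤ g x ^ 2
    have hwn : (0:ℝ) ≤ ‖w x‖ := norm_nonneg _
    have hφn : (0:ℝ) ≤ ‖φ x‖ := norm_nonneg _
    have ha1le : a1 ≤ g x ^ 2 := by
      have h := norm_add_le (w x) (δ • φ x)
      rw [norm_smul, Real.norm_eq_abs, abs_of_pos hδ0] at h
      have h2 : ‖w x + δ • φ x‖ ≤ g x := by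
        rw [hg_def]; simp only
        nlinarith
      rw [ha1_def]
      exact pow_le_pow_left₀ (norm_nonneg _) h2 2
    have ha0le : a0 ≤ g x ^ 2 := by
      rw [ha0_def, hg_def]
      simp only
      nlinarith
    -- |a1 - a0| ≤ δ * (2 * g x ^ 2)
    have hkey : a1 = a0 + 2 * ⟪w x, φ x⟫ * δ + ‖φ x‖ ^ 2 * δ ^ 2 := by
      rw [ha1_def, ha0_def, norm_add_sq_real, real_inner_smul_right, norm_smul,
        Real.norm_eq_abs, mul_pow, sq_abs]
      ring
    have hip : |⟪w x, φ x⟫| ≤ ‖w x‖ * ‖φ x‖ := abs_real_inner_le_norm _ _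
    have hdiff : |a1 - a0| ≤ δ * (2 * g x ^ 2) := by
      rw [hkey]
      have h1 : |a0 + 2 * ⟪w x, φ x⟫ * δ + ‖φ x‖ ^ 2 * δ ^ 2 - a0|
          = |2 * ⟪w x, φ x⟫ * δ + ‖φ x‖ ^ 2 * δ ^ 2| := by ring_nf
      rw [h1]
      have h2 := abs_add_le (2 * ⟪w x, φ x⟫ * δ) (‖φ x‖ ^ 2 * δ ^ 2)
      have h3 : |2 * ⟪w x, φ x⟫ * δ| = 2 * |⟪w x, φ x⟫| * δ := by
        rw [abs_mul, abs_mul, abs_of_pos hδ0]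
        simp [abs_of_nonneg, abs_two]
      have h4 : |‖φ x‖ ^ 2 * δ ^ 2| = ‖φ x‖ ^ 2 * δ ^ 2 := abs_of_nonneg (by positivity)
      rw [hg_def]
      simp only
      nlinarith [mul_le_mul_of_nonneg_right hip hδ0.le,
        mul_nonneg (sq_nonneg (‖φ x‖)) (mul_nonneg hδ0.le (sub_nonneg.mpr hδ1)),
        sq_nonneg (‖w x‖), mul_nonneg hwn hφn, hδ0.le]
    -- the φ₂ bound at max (max a1 a0) 1
    have hT : max a1 a0 ≤ g x ^ 2 := max_le ha1le ha0le
    have hT0 : 0 ≤ max a1 a0 := le_max_of_le_left (sq_nonneg _)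
    have hp2 : (0:ℝ) ≤ (r - 2) / 2 := by linarith
    have hrp2 : (g x ^ 2 : ℝ) ^ ((r - 2) / 2) = g x ^ (r - 2) := by
      rw [← Real.rpow_natCast (g x) 2, ← Real.rpow_mul hgx]
      congr 1
      push_cast
      ring
    have hφ₂b : φ₂ (max (max a1 a0) 1) ≤ C * (2 + g x ^ (r - 2)) := by
      have hb := hbound (max (max a1 a0) 1) (le_max_right _ _)
      have hle : (max (max a1 a0) 1 : ℝ) ^ ((r - 2) / 2) ≤ 1 + g x ^ (r - 2) := by
        rcases le_total (max a1 a0) 1 with h | h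
        · rw [max_eq_right h, Real.one_rpow]
          linarith [Real.rpow_nonneg hgx (r - 2)]
        · rw [max_eq_left h, ← hrp2]
          have := Real.rpow_le_rpow hT0 hT hp2
          linarith
      nlinarith
    have hφ₂b0 : 0 ≤ φ₂ (max (max a1 a0) 1) := hφ₂nn _ (mem_Ici.mpr (le_max_right _ _))
    have habs := psi_abs_sub_bound hφ₁c hφ₂c hφ₁m hφ₂m hφ₁nn hφ₂nn hΨ
      (sq_nonneg (‖w x + δ • φ x‖)) (sq_nonneg (‖w x‖))
    rw [← ha1_def, ← ha0_def] at habs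
    have hgr : g x ^ (r - 2) * g x ^ 2 = g x ^ r := by
      rw [← Real.rpow_natCast (g x) 2, ← Real.rpow_add_of_nonneg hgx (by linarith) (by norm_num)]
      norm_num
    have hrnn : 0 ≤ g x ^ (r - 2) := Real.rpow_nonneg hgx _
    -- chain
    rw [Real.norm_eq_abs, abs_mul, abs_of_pos (by positivity : (0:ℝ) < 1/δ)]
    have step1 : |Ψ a1 - Ψ a0| ≤ (1/2) * (φ₁ 1 + C * (2 + g x ^ (r - 2))) * (δ * (2 * g x ^ 2)) := by
      calc |Ψ a1 - Ψ a0| ≤ (1/2) * (φ₁ 1 + φ₂ (max (max a1 a0) 1)) * |a1 - a0| := habs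
        _ ≤ (1/2) * (φ₁ 1 + C * (2 + g x ^ (r - 2))) * (δ * (2 * g x ^ 2)) := by
            apply mul_le_mul
            · nlinarith
            · exact hdiff
            · exact abs_nonneg _
            · nlinarith
    calc (1/δ) * |Ψ a1 - Ψ a0|
        ≤ (1/δ) * ((1/2) * (φ₁ 1 + C * (2 + g x ^ (r - 2))) * (δ * (2 * g x ^ 2))) := by
          apply mul_le_mul_of_nonneg_left step1 (by positivity)
      _ = (φ₁ 1 + C * (2 + g x ^ (r - 2))) * g x ^ 2 := by field_simp
      _ = B x := by rw [hB_def]; simp only; linear_combination C * hgr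
  -- a.e. pointwise convergence
  have h_lim : ∀ᵐ x ∂μ, Tendsto
      (fun δ : ℝ => (1/δ) * (Ψ (‖w x + δ • φ x‖ ^ 2) - Ψ (‖w x‖ ^ 2)))
      (nhdsWithin (0:ℝ) (Ioi 0)) (nhds (φ₁ (‖w x‖ ^ 2) * ⟪w x, φ x⟫)) := by
    filter_upwards [hsupp] with x hx
    by_cases hx1 : ‖w x‖ < 1
    · have hΨ₁ : ∀ a : ℝ, 0 ≤ a → a ≤ 1 → Ψ a = (1/2) * ∫ t in (1:ℝ)..a, φ₁ t :=
        fun a h0 h1 => by rw [hΨ a h0, if_pos h1]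
      exact psi_slope_tendsto hφ₁c hΨ₁ (w x) (φ x) hx1
    · have hφx : φ x = 0 := hx (le_of_not_gt hx1)
      simp only [hφx, smul_zero, add_zero, sub_self, mul_zero, inner_zero_right]
      exact tendsto_const_nhds
  -- dominated convergence
  have hDCT := MeasureTheory.tendsto_integral_filter_of_dominated_convergence
    (μ := μ) (l := nhdsWithin (0:ℝ) (Ioi 0))
    (F := fun δ x => (1/δ) * (Ψ (‖w x + δ • φ x‖ ^ 2) - Ψ (‖w x‖ ^ 2)))
    (f := fun x => φ₁ (‖w x‖ ^ 2) * ⟪w x, φ x⟫)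
    B (Eventually.of_forall hmeas) h_bound hB_int h_lim
  simpa only [MeasureTheory.integral_const_mul] using hDCT
end
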